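/- arXiv:1411.1211 — 7 statements merged into one kernel-verified Lean document; each statement's English description precedes it below -/
import Mathlib

section
/- Let the state space S = {1,…,n}, the nonempty finite action sets A_i and B_{i,a}, and the transition probability vectors P_i^{ab} be fixed, and let the transition payments vary. Then the following are equivalent: (1) for every choice of transition payments r = (r_i^{ab}), the Shapley operator T_r has an eigenpair, i.e. there exist u ∈ ℝⁿ and λ ∈ ℝ with T_r(u) = λ𝟏 + u; (2) every fixed point of the payment-free Shapley operator F is proportional to the all-ones vector 𝟏 (i.e. F(x) = x implies x = c𝟏 for some c ∈ ℝ). -/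
open Filter Topology

section InfSup
variable {ι : Type*} [Fintype ι] [Nonempty ι]

lemma exists_iInf_eq (f : ι → ℝ) : ∃ a, (⨅ i, f i) = f a ∧ ∀ b, f a ≤ f b := by
  obtain ⟨a, ha⟩ := Finite.exists_min f
  exact ⟨a, le_antisymm (ciInf_le (Set.Finite.bddBelow (Set.finite_range f)) a) (le_ciInf ha), ha⟩

lemma exists_iSup_eq (f : ι → ℝ) : ∃ a, (⨆ i, f i) = f a ∧ ∀ b, f b ≤ f a := by
  obtain ⟨a, ha⟩ := Finite.exists_max f
  exact ⟨a, le_antisymm (ciSup_le ha) (le_ciSup (Set.Finite.bddAbove (Set.finite_range f)) a), ha⟩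

omit [Nonempty ι] in
lemma fin_iInf_le (f : ι → ℝ) (a : ι) : (⨅ i, f i) ≤ f a :=
  ciInf_le (Set.Finite.bddBelow (Set.finite_range f)) a

omit [Nonempty ι] in
lemma fin_le_iSup (f : ι → ℝ) (a : ι) : f a ≤ ⨆ i, f i :=
  le_ciSup (Set.Finite.bddAbove (Set.finite_range f)) a

lemma fin_iInf_mono {f g : ι → ℝ} (h : ∀ i, f i ≤ g i) : (⨅ i, f i) ≤ ⨅ i, g i := by
  obtain ⟨a, ha, _⟩ := exists_iInf_eq g
  exact ha ▸ le_trans (fin_iInf_le f a) (h a)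

lemma fin_iSup_mono {f g : ι → ℝ} (h : ∀ i, f i ≤ g i) : (⨆ i, f i) ≤ ⨆ i, g i := by
  obtain ⟨a, ha, _⟩ := exists_iSup_eq f
  exact ha ▸ le_trans (h a) (fin_le_iSup g a)

lemma iInf_add_const (f : ι → ℝ) (c : ℝ) : (⨅ i, f i + c) = (⨅ i, f i) + c := by
  obtain ⟨a, ha, hm⟩ := exists_iInf_eq f
  refine le_antisymm (le_trans (fin_iInf_le (fun i => f i + c) a) (by rw [ha])) (le_ciInf fun b => by
    rw [ha]; exact add_le_add (hm b) le_rfl)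

lemma iSup_add_const (f : ι → ℝ) (c : ℝ) : (⨆ i, f i + c) = (⨆ i, f i) + c := by
  obtain ⟨a, ha, hm⟩ := exists_iSup_eq f
  refine le_antisymm (ciSup_le fun b => by rw [ha]; exact add_le_add (hm b) le_rfl)
    (le_trans (by rw [ha]) (fin_le_iSup (fun i => f i + c) a))

lemma iInf_const_mul (f : ι → ℝ) {c : ℝ} (hc : 0 ≤ c) : (⨅ i, c * f i) = c * ⨅ i, f i := by
  obtain ⟨a, ha, hm⟩ := exists_iInf_eq f
  refine le_antisymm (le_trans (fin_iInf_le (fun i => c * f i) a) (by rw [ha])) (le_ciInf fun b => by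
    rw [ha]; exact mul_le_mul_of_nonneg_left (hm b) hc)

lemma iSup_const_mul (f : ι → ℝ) {c : ℝ} (hc : 0 ≤ c) : (⨆ i, c * f i) = c * ⨆ i, f i := by
  obtain ⟨a, ha, hm⟩ := exists_iSup_eq f
  refine le_antisymm (ciSup_le fun b => by rw [ha]; exact mul_le_mul_of_nonneg_left (hm b) hc)
    (le_trans (by rw [ha]) (fin_le_iSup (fun i => c * f i) a))

lemma iInf_const_add (f : ι → ℝ) (c : ℝ) : (⨅ i, c + f i) = c + ⨅ i, f i := by
  simp_rw [add_comm c]; rw [iInf_add_const]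

lemma iSup_const_add (f : ι → ℝ) (c : ℝ) : (⨆ i, c + f i) = c + ⨆ i, f i := by
  simp_rw [add_comm c]; rw [iSup_add_const]

end InfSup

/-- The Shapley operator of a zero-sum perfect-information stochastic game with
state space `Fin n`, action sets `A i` for MIN and `B i a` for MAX,
transition payments `r` and transition probabilities `P`:
`[T(x)]_i = min_a max_b (r_i^{ab} + Σ_j P_{ij}^{ab} x_j)`. -/
noncomputable def shapley {n : ℕ} {A : Fin n → Type*} {B : ∀ i, A i → Type*}
    [∀ i, Fintype (A i)] [∀ i, Nonempty (A i)]
    [∀ i a, Fintype (B i a)] [∀ i a, Nonempty (B i a)]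
    (r : ∀ i (a : A i), B i a → ℝ) (P : ∀ i (a : A i), B i a → Fin n → ℝ) :
    (Fin n → ℝ) → (Fin n → ℝ) :=
  fun x i => ⨅ a : A i, ⨆ b : B i a, (r i a b + ∑ j, P i a b j * x j)

section Shap
variable {n : ℕ} {A : Fin n → Type*} {B : ∀ i, A i → Type*}
    [∀ i, Fintype (A i)] [∀ i, Nonempty (A i)]
    [∀ i a, Fintype (B i a)] [∀ i a, Nonempty (B i a)]
    (r : ∀ i (a : A i), B i a → ℝ) (P : ∀ i (a : A i), B i a → Fin n → ℝ)

lemma shap_mono (hP0 : ∀ i a b j, 0 ≤ P i a b j) {x y : Fin n → ℝ}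
    (h : ∀ j, x j ≤ y j) (i : Fin n) : shapley r P x i ≤ shapley r P y i := by
  apply fin_iInf_mono; intro a; apply fin_iSup_mono; intro b
  have : ∑ j, P i a b j * x j ≤ ∑ j, P i a b j * y j :=
    Finset.sum_le_sum fun j _ => mul_le_mul_of_nonneg_left (h j) (hP0 i a b j)
  linarith

lemma shap_add_const (hP1 : ∀ i a b, ∑ j, P i a b j = 1) (x : Fin n → ℝ) (c : ℝ) :
    shapley r P (x + c • (1 : Fin n → ℝ)) = shapley r P x + c • (1 : Fin n → ℝ) := by
  funext i
  have key : ∀ (a : A i) (b : B i a),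
      r i a b + ∑ j, P i a b j * (x j + c)
        = (r i a b + ∑ j, P i a b j * x j) + c := by
    intro a b
    have : ∑ j, P i a b j * (x j + c)
        = ∑ j, (P i a b j * x j + P i a b j * c) := by
      apply Finset.sum_congr rfl; intro j _; ring
    rw [this, Finset.sum_add_distrib, ← Finset.sum_mul, hP1 i a b]
    ring
  simp only [shapley, Pi.add_apply, Pi.smul_apply, Pi.one_apply, smul_eq_mul, mul_one]
  simp_rw [key, iSup_add_const, iInf_add_const]

lemma shap_smul (hP1 : ∀ i a b, ∑ j, P i a b j = 1) (x : Fin n → ℝ) {c : ℝ} (hc : 0 ≤ c) :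
    shapley (fun _ _ _ => (0:ℝ)) P (c • x) = c • shapley (fun _ _ _ => (0:ℝ)) P x := by
  funext i
  have key : ∀ (a : A i) (b : B i a),
      (0:ℝ) + ∑ j, P i a b j * ((c • x) j) = c * ((0:ℝ) + ∑ j, P i a b j * x j) := by
    intro a b
    simp only [zero_add, Pi.smul_apply, smul_eq_mul, Finset.mul_sum]
    apply Finset.sum_congr rfl; intro j _; ring
  show (⨅ a : A i, ⨆ b : B i a, ((0:ℝ) + ∑ j, P i a b j * ((c • x) j)))
      = c * (⨅ a : A i, ⨆ b : B i a, ((0:ℝ) + ∑ j, P i a b j * x j))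
  simp_rw [key, iSup_const_mul _ hc, iInf_const_mul _ hc]

lemma shap_le_of_le (hP0 : ∀ i a b j, 0 ≤ P i a b j) (hP1 : ∀ i a b, ∑ j, P i a b j = 1)
    {x y : Fin n → ℝ} {d : ℝ} (h : ∀ j, x j ≤ y j + d) (i : Fin n) :
    shapley r P x i ≤ shapley r P y i + d := by
  have h1 : shapley r P x i ≤ shapley r P (y + d • (1 : Fin n → ℝ)) i :=
    shap_mono r P hP0 (fun j => by simpa using h j) i
  rw [shap_add_const r P hP1] at h1
  simpa using h1

lemma shap_payments_diff (r' : ∀ i (a : A i), B i a → ℝ) {R : ℝ}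
    (hR : ∀ i a b, |r i a b - r' i a b| ≤ R) (x : Fin n → ℝ) (i : Fin n) :
    |shapley r P x i - shapley r' P x i| ≤ R := by
  have key : ∀ (s s' : ∀ (a : A i), B i a → ℝ), (∀ a b, s a b ≤ s' a b + R) →
      (⨅ a : A i, ⨆ b : B i a, s a b) ≤ (⨅ a : A i, ⨆ b : B i a, s' a b) + R := by
    intro s s' h
    have : ∀ a : A i, (⨆ b : B i a, s a b) ≤ (⨆ b : B i a, s' a b) + R := by
      intro a
      rw [← iSup_add_const]
      exact fin_iSup_mono fun b => h a b
    calc (⨅ a : A i, ⨆ b : B i a, s a b) ≤ ⨅ a : A i, ((⨆ b : B i a, s' a b) + R) :=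
          fin_iInf_mono this
      _ = (⨅ a : A i, ⨆ b : B i a, s' a b) + R := iInf_add_const _ _
  rw [abs_le]
  constructor
  · have := key (fun a b => r' i a b + ∑ j, P i a b j * x j)
      (fun a b => r i a b + ∑ j, P i a b j * x j)
      (fun a b => by have := (abs_le.mp (hR i a b)).1; linarith)
    simp only [shapley]; linarith [this]
  · have := key (fun a b => r i a b + ∑ j, P i a b j * x j)
      (fun a b => r' i a b + ∑ j, P i a b j * x j)
      (fun a b => by have := (abs_le.mp (hR i a b)).2; linarith)
    simp only [shapley]; linarith [this]

lemma shap_lipschitz (hP0 : ∀ i a b j, 0 ≤ P i a b j) (hP1 : ∀ i a b, ∑ j, P i a b j = 1) :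
    LipschitzWith 1 (shapley r P) := by
  refine LipschitzWith.of_dist_le_mul fun x y => ?_
  rw [NNReal.coe_one, one_mul]
  rw [dist_pi_le_iff dist_nonneg]
  intro i
  rw [Real.dist_eq, abs_le]
  have hd : ∀ j, |x j - y j| ≤ dist x y := fun j => by
    rw [← Real.dist_eq]; exact dist_le_pi_dist x y j
  constructor
  · have := shap_le_of_le r P hP0 hP1 (x := y) (y := x) (d := dist x y)
      (fun j => by have := (abs_le.mp (hd j)).1; linarith) i
    linarith
  · have := shap_le_of_le r P hP0 hP1 (x := x) (y := y) (d := dist x y)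
      (fun j => by have := (abs_le.mp (hd j)).2; linarith) i
    linarith

lemma shap_iter_add_const (hP1 : ∀ i a b, ∑ j, P i a b j = 1) (k : ℕ) (x : Fin n → ℝ) (c : ℝ) :
    (shapley r P)^[k] (x + c • (1 : Fin n → ℝ)) = (shapley r P)^[k] x + c • (1 : Fin n → ℝ) := by
  induction k with
  | zero => simp
  | succ k ih =>
    rw [Function.iterate_succ_apply', Function.iterate_succ_apply', ih,
      shap_add_const r P hP1]

lemma shap_iter_mono (hP0 : ∀ i a b j, 0 ≤ P i a b j) (k : ℕ) {x y : Fin n → ℝ}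
    (h : ∀ j, x j ≤ y j) (i : Fin n) : (shapley r P)^[k] x i ≤ (shapley r P)^[k] y i := by
  induction k generalizing x y i with
  | zero => simpa using h i
  | succ k ih =>
    rw [Function.iterate_succ_apply', Function.iterate_succ_apply']
    exact shap_mono r P hP0 (fun j => ih h j) i

lemma shap_iter_le_of_le (hP0 : ∀ i a b j, 0 ≤ P i a b j) (hP1 : ∀ i a b, ∑ j, P i a b j = 1)
    (k : ℕ) {x y : Fin n → ℝ} {d : ℝ} (h : ∀ j, x j ≤ y j + d) (i : Fin n) :
    (shapley r P)^[k] x i ≤ (shapley r P)^[k] y i + d := by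
  have h1 : ∀ j, x j ≤ (y + d • (1 : Fin n → ℝ)) j := fun j => by simpa using h j
  have h2 := shap_iter_mono r P hP0 k h1 i
  have h3 := congrFun (shap_iter_add_const r P hP1 k y d) i
  simp only [Pi.add_apply, Pi.smul_apply, Pi.one_apply, smul_eq_mul, mul_one] at h3
  rw [h3] at h2
  exact h2

lemma shap_left_const (v : Fin n → ℝ) (x : Fin n → ℝ) :
    shapley (fun i _ _ => v i) P x = v + shapley (fun _ _ _ => (0:ℝ)) P x := by
  funext i
  show (⨅ a : A i, ⨆ b : B i a, (v i + ∑ j, P i a b j * x j))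
      = v i + ⨅ a : A i, ⨆ b : B i a, ((0:ℝ) + ∑ j, P i a b j * x j)
  simp_rw [zero_add, iSup_const_add, iInf_const_add]

end Shap

lemma nonexp_fixed_of_bounded_orbit {E : Type*} [NormedAddCommGroup E] [NormedSpace ℝ E]
    [FiniteDimensional ℝ E] (f : E → E) (hf : LipschitzWith 1 f) (M : ℝ)
    (hM : ∀ k : ℕ, ‖f^[k] 0‖ ≤ M) : ∃ y, f y = y := by
  have hM0 : 0 ≤ M := le_trans (norm_nonneg _) (hM 0)
  have hfd : ∀ x y : E, ‖f x - f y‖ ≤ ‖x - y‖ := by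
    intro x y
    have := hf.dist_le_mul x y
    rwa [NNReal.coe_one, one_mul, dist_eq_norm, dist_eq_norm] at this
  -- for each m, an approximate fixed point
  have key : ∀ m : ℕ, ∃ y : E, ‖y‖ ≤ 2 * M + 1 ∧
      ‖y - f y‖ ≤ (1 / (m + 1)) * (2 * M + 1 + ‖f 0‖) := by
    intro m
    set c : ℝ := (m : ℝ) / (m + 1) with hc
    have hm1 : (0:ℝ) < (m : ℝ) + 1 := by positivity
    have hc0 : 0 ≤ c := by positivity
    have hc1 : c < 1 := by rw [hc, div_lt_one hm1]; linarith
    set K : NNReal := ⟨c, hc0⟩ with hK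
    have hKc : (K : ℝ) = c := rfl
    have hg : ContractingWith K (fun y : E => c • f y) := by
      constructor
      · exact_mod_cast hc1
      · refine LipschitzWith.of_dist_le_mul fun x y => ?_
        rw [dist_smul₀, hKc]
        calc ‖c‖ * dist (f x) (f y) ≤ ‖c‖ * (1 * dist x y) := by
              have := hf.dist_le_mul x y
              exact mul_le_mul_of_nonneg_left (by rwa [NNReal.coe_one] at this) (norm_nonneg c)
          _ = c * dist x y := by rw [one_mul, Real.norm_eq_abs, abs_of_nonneg hc0]
    obtain ⟨y, hy⟩ : ∃ y : E, c • f y = y := ⟨_, hg.fixedPoint_isFixedPt⟩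
    -- orbit distance recursion
    have hrec : ∀ k : ℕ, ‖y - f^[k] 0‖ ≤ c ^ k * ‖y‖ + M := by
      intro k
      induction k with
      | zero =>
        simp only [Function.iterate_zero, id_eq, sub_zero, pow_zero, one_mul]
        linarith
      | succ k ih =>
        have h1 : y - f^[k+1] 0 = c • (f y - f (f^[k] 0)) - (1 - c) • f^[k+1] 0 := by
          rw [Function.iterate_succ_apply']
          nth_rewrite 1 [← hy]
          module
        have h2 : ‖y - f^[k+1] 0‖ ≤ c * ‖f y - f (f^[k] 0)‖ + (1 - c) * ‖f^[k+1] 0‖ := by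
          rw [h1]
          refine le_trans (norm_sub_le _ _) ?_
          rw [norm_smul, norm_smul, Real.norm_eq_abs, Real.norm_eq_abs,
            abs_of_nonneg hc0, abs_of_nonneg (by linarith : (0:ℝ) ≤ 1 - c)]
        have h3 : ‖f y - f (f^[k] 0)‖ ≤ ‖y - f^[k] 0‖ := hfd _ _
        have h4 := hM (k+1)
        calc ‖y - f^[k+1] 0‖ ≤ c * (c ^ k * ‖y‖ + M) + (1 - c) * M := by
              refine le_trans h2 ?_
              have := mul_le_mul_of_nonneg_left (le_trans h3 ih) hc0
              have := mul_le_mul_of_nonneg_left h4 (by linarith : (0:ℝ) ≤ 1 - c)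
              linarith
          _ = c ^ (k+1) * ‖y‖ + M := by ring
    -- choose k with small geometric term
    obtain ⟨k, hk⟩ : ∃ k : ℕ, c ^ k * ‖y‖ ≤ 1 := by
      rcases eq_or_lt_of_le (norm_nonneg y) with h0 | h0
      · exact ⟨0, by rw [← h0]; simp⟩
      · obtain ⟨k, hk⟩ := exists_pow_lt_of_lt_one (show (0:ℝ) < 1 / ‖y‖ by positivity) hc1
        refine ⟨k, ?_⟩
        have := mul_le_mul_of_nonneg_right hk.le (norm_nonneg y)
        rwa [one_div, inv_mul_cancel₀ (ne_of_gt h0)] at this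
    have hyb : ‖y‖ ≤ 2 * M + 1 := by
      have h5 := hrec k
      have h6 : ‖y‖ - ‖f^[k] 0‖ ≤ ‖y - f^[k] 0‖ := norm_sub_norm_le _ _
      have := hM k
      linarith
    refine ⟨y, hyb, ?_⟩
    have hfyb : ‖f y‖ ≤ 2 * M + 1 + ‖f 0‖ := by
      have : ‖f y - f 0‖ ≤ ‖y - 0‖ := hfd _ _
      rw [sub_zero] at this
      have h7 : ‖f y‖ - ‖f 0‖ ≤ ‖f y - f 0‖ := norm_sub_norm_le _ _
      linarith
    have : y - f y = -((1 - c) • f y) := by nth_rewrite 1 [← hy]; module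
    rw [this, norm_neg, norm_smul, Real.norm_eq_abs, abs_of_nonneg (by linarith : (0:ℝ) ≤ 1 - c)]
    have h1c : 1 - c = 1 / ((m:ℝ) + 1) := by
      rw [hc]; field_simp
      ring
    rw [h1c]
    exact mul_le_mul_of_nonneg_left hfyb (by positivity)
  choose u hu1 hu2 using key
  have hcpt : IsCompact (Metric.closedBall (0:E) (2 * M + 1)) := isCompact_closedBall _ _
  have humem : ∀ m, u m ∈ Metric.closedBall (0:E) (2 * M + 1) := by
    intro m; rw [Metric.mem_closedBall, dist_zero_right]; exact hu1 m
  obtain ⟨y, -, φ, hφ, hlim⟩ := hcpt.tendsto_subseq humem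
  refine ⟨y, ?_⟩
  have hfc : Continuous f := hf.continuous
  have h1 : Tendsto (fun j => ‖u (φ j) - f (u (φ j))‖) atTop (𝓝 ‖y - f y‖) :=
    (Tendsto.sub hlim ((hfc.tendsto y).comp hlim)).norm
  have h2 : Tendsto (fun j => ‖u (φ j) - f (u (φ j))‖) atTop (𝓝 0) := by
    have hb : Tendsto (fun j : ℕ => (1 / ((φ j : ℝ) + 1)) * (2 * M + 1 + ‖f 0‖)) atTop (𝓝 0) := by
      have : Tendsto (fun j : ℕ => 1 / ((j : ℝ) + 1)) atTop (𝓝 0) :=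
        tendsto_one_div_add_atTop_nhds_zero_nat
      have := (this.comp hφ.tendsto_atTop).mul_const (2 * M + 1 + ‖f 0‖)
      simpa using this
    exact squeeze_zero (fun j => norm_nonneg _) (fun j => hu2 (φ j)) hb
  have := tendsto_nhds_unique h1 h2
  have : y - f y = 0 := by rwa [norm_eq_zero] at this
  have := sub_eq_zero.mp this
  exact this.symm

section Main
variable {n : ℕ} {A : Fin n → Type*} {B : ∀ i, A i → Type*}
    [∀ i, Fintype (A i)] [∀ i, Nonempty (A i)]
    [∀ i a, Fintype (B i a)] [∀ i a, Nonempty (B i a)]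
    (P : ∀ i (a : A i), B i a → Fin n → ℝ)

lemma dir12 (hP0 : ∀ i a b j, 0 ≤ P i a b j) (hP1 : ∀ i a b, ∑ j, P i a b j = 1)
    (h : ∀ r : ∀ i (a : A i), B i a → ℝ, ∃ (u : Fin n → ℝ) (lam : ℝ),
        shapley r P u = lam • (1 : Fin n → ℝ) + u) :
    ∀ x : Fin n → ℝ, shapley (fun _ _ _ => (0 : ℝ)) P x = x →
        ∃ c : ℝ, x = c • (1 : Fin n → ℝ) := by
  intro x hx
  obtain ⟨u, lam, hu⟩ := h (fun i _ _ => x i)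
  set T := shapley (fun i _ _ => x i) P with hT
  have hT0 : ∀ k : ℕ, T^[k] 0 = (k : ℝ) • x := by
    intro k
    induction k with
    | zero => simp
    | succ k ih =>
      rw [Function.iterate_succ_apply', ih, hT, shap_left_const,
        shap_smul P hP1 x (Nat.cast_nonneg k), hx]
      funext i
      simp only [Pi.add_apply, Pi.smul_apply, smul_eq_mul]
      push_cast; ring
  have hTu : ∀ k : ℕ, T^[k] u = u + ((k : ℝ) * lam) • (1 : Fin n → ℝ) := by
    intro k
    induction k with
    | zero => simp
    | succ k ih =>
      rw [Function.iterate_succ_apply', ih, hT, shap_add_const _ P hP1, ← hT, hu]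
      funext i
      simp only [Pi.add_apply, Pi.smul_apply, Pi.one_apply, smul_eq_mul]
      push_cast; ring
  have hdist : ∀ k : ℕ, dist (T^[k] 0) (T^[k] u) ≤ dist (0 : Fin n → ℝ) u := by
    intro k
    have := ((shap_lipschitz (fun i _ _ => x i) P hP0 hP1).iterate k).dist_le_mul (0 : Fin n → ℝ) u
    simpa using this
  have key : ∀ i, x i = lam := by
    intro i
    by_contra hne
    have hpos : 0 < |x i - lam| := abs_pos.mpr (sub_ne_zero.mpr hne)
    obtain ⟨k, hk⟩ := exists_nat_gt ((dist (0 : Fin n → ℝ) u + ‖u‖) / |x i - lam|)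
    have h1 : |(k : ℝ) * x i - (u i + (k : ℝ) * lam)| ≤ dist (0 : Fin n → ℝ) u := by
      have h2 := hdist k
      rw [hT0, hTu] at h2
      have h3 := le_trans (dist_le_pi_dist ((k : ℝ) • x)
        (u + ((k : ℝ) * lam) • (1 : Fin n → ℝ)) i) h2
      simpa [Real.dist_eq, Pi.smul_apply, smul_eq_mul, mul_one] using h3
    have h5 : |u i| ≤ ‖u‖ := by rw [← Real.norm_eq_abs]; exact norm_le_pi_norm u i
    have h4 : (k : ℝ) * |x i - lam| ≤ dist (0 : Fin n → ℝ) u + ‖u‖ := by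
      have heq : (k : ℝ) * (x i - lam) = ((k : ℝ) * x i - (u i + (k : ℝ) * lam)) + u i := by ring
      have h6 : |(k : ℝ) * (x i - lam)| ≤ dist (0 : Fin n → ℝ) u + |u i| := by
        rw [heq]; exact le_trans (abs_add_le _ _) (add_le_add h1 le_rfl)
      rw [abs_mul, Nat.abs_cast] at h6
      linarith
    rw [div_lt_iff₀ hpos] at hk
    nlinarith
  exact ⟨lam, funext fun i => by simp [key i]⟩


lemma omega_bound [Nonempty (Fin n)]
    (hP0 : ∀ i a b j, 0 ≤ P i a b j) (hP1 : ∀ i a b, ∑ j, P i a b j = 1)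
    (r : ∀ i (a : A i), B i a → ℝ)
    (hfix : ∀ x : Fin n → ℝ, shapley (fun _ _ _ => (0 : ℝ)) P x = x →
        ∃ c : ℝ, x = c • (1 : Fin n → ℝ))
    {lmin mu R : ℝ} (hR0 : 0 ≤ R) (hR : ∀ i a b, |r i a b| ≤ R) :
    ∃ M : ℝ, 0 ≤ M ∧ ∀ x : Fin n → ℝ,
      (∀ i, lmin + x i ≤ shapley r P x i ∧ shapley r P x i ≤ mu + x i) →
      (⨆ i, x i) - (⨅ i, x i) ≤ M := by
  set F := shapley (fun _ _ _ => (0 : ℝ)) P with hF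
  by_contra hcon
  push_neg at hcon
  have hseq : ∀ k : ℕ, ∃ x : Fin n → ℝ,
      (∀ i, lmin + x i ≤ shapley r P x i ∧ shapley r P x i ≤ mu + x i) ∧
      ((k : ℝ) + 1) < (⨆ i, x i) - (⨅ i, x i) := by
    intro k
    obtain ⟨x, hx1, hx2⟩ := hcon ((k : ℝ) + 1) (by positivity)
    exact ⟨x, hx1, hx2⟩
  choose W hWS hWω using hseq
  set C : ℝ := R + (max |lmin| |mu|) with hC
  have hC0 : 0 ≤ C := by positivity
  -- pointwise F-vs-identity bound on the slice
  have hFW : ∀ k i, |F (W k) i - W k i| ≤ C := by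
    intro k i
    have h1 : |F (W k) i - shapley r P (W k) i| ≤ R := by
      have := shap_payments_diff (fun _ _ _ => (0:ℝ)) P r
        (R := R) (fun i a b => by simpa using hR i a b) (W k) i
      exact this
    have h2 : |shapley r P (W k) i - W k i| ≤ max |lmin| |mu| := by
      obtain ⟨hl, hu⟩ := hWS k i
      rw [abs_le]
      constructor
      · have : -|lmin| ≤ lmin := neg_abs_le lmin
        linarith [le_max_left |lmin| |mu|]
      · have : mu ≤ |mu| := le_abs_self mu
        linarith [le_max_right |lmin| |mu|]
    calc |F (W k) i - W k i| ≤ |F (W k) i - shapley r P (W k) i| +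
          |shapley r P (W k) i - W k i| := abs_sub_le _ _ _
      _ ≤ C := by rw [hC]; exact add_le_add h1 h2
  set bot : ℕ → ℝ := fun k => ⨅ i, W k i with hbot
  set ω : ℕ → ℝ := fun k => (⨆ i, W k i) - bot k with hω
  have hωpos : ∀ k, 0 < ω k := fun k => lt_trans (by positivity) (hWω k)
  set y : ℕ → Fin n → ℝ := fun k => (ω k)⁻¹ • (W k + (-(bot k)) • (1 : Fin n → ℝ)) with hy
  have hy01 : ∀ k i, 0 ≤ y k i ∧ y k i ≤ 1 := by
    intro k i
    have h1 : bot k ≤ W k i := fin_iInf_le _ i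
    have h2 : W k i ≤ (⨆ i, W k i) := fin_le_iSup _ i
    have hinv : 0 ≤ (ω k)⁻¹ := le_of_lt (inv_pos.mpr (hωpos k))
    constructor
    · simp only [hy, Pi.smul_apply, Pi.add_apply, Pi.one_apply, smul_eq_mul, mul_one]
      have : 0 ≤ W k i + -(bot k) := by linarith
      positivity
    · simp only [hy, Pi.smul_apply, Pi.add_apply, Pi.one_apply, smul_eq_mul, mul_one]
      rw [← inv_mul_cancel₀ (ne_of_gt (hωpos k))]
      apply mul_le_mul_of_nonneg_left _ hinv
      simp only [hω]; linarith
  have hymem : ∀ k, y k ∈ Metric.closedBall (0 : Fin n → ℝ) 1 := by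
    intro k
    rw [Metric.mem_closedBall, dist_zero_right]
    rw [pi_norm_le_iff_of_nonneg zero_le_one]
    intro i
    rw [Real.norm_eq_abs, abs_le]
    exact ⟨by linarith [(hy01 k i).1], (hy01 k i).2⟩
  -- F-approximation for y
  have hFy : ∀ k, ‖F (y k) - y k‖ ≤ C / ((k : ℝ) + 1) := by
    intro k
    have hinv : (0:ℝ) ≤ (ω k)⁻¹ := le_of_lt (inv_pos.mpr (hωpos k))
    have hFyk : F (y k) = (ω k)⁻¹ • (F (W k) + (-(bot k)) • (1 : Fin n → ℝ)) := by
      rw [hy, hF]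
      rw [shap_smul P hP1 _ hinv, shap_add_const _ P hP1]
    have hcoord : ∀ i, |(F (y k) - y k) i| ≤ C / ((k:ℝ)+1) := by
      intro i
      have : (F (y k) - y k) i = (ω k)⁻¹ * (F (W k) i - W k i) := by
        rw [hFyk, hy]
        simp only [Pi.sub_apply, Pi.smul_apply, Pi.add_apply, Pi.one_apply, smul_eq_mul, mul_one]
        ring
      rw [this, abs_mul, abs_of_nonneg hinv]
      have h1 : (ω k)⁻¹ ≤ ((k:ℝ)+1)⁻¹ := by
        apply inv_anti₀ (by positivity) (le_of_lt (hWω k))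
      calc (ω k)⁻¹ * |F (W k) i - W k i| ≤ ((k:ℝ)+1)⁻¹ * C := by
            apply mul_le_mul h1 (hFW k i) (abs_nonneg _) (by positivity)
        _ = C / ((k:ℝ)+1) := by rw [div_eq_mul_inv]; ring
    rw [pi_norm_le_iff_of_nonneg (by positivity)]
    intro i
    rw [Real.norm_eq_abs]
    exact hcoord i
  -- extract a convergent subsequence
  obtain ⟨z, -, φ, hφ, hlim⟩ :=
    (isCompact_closedBall (0 : Fin n → ℝ) 1).tendsto_subseq hymem
  have hFcont : Continuous F := by
    rw [hF]
    exact (shap_lipschitz (fun _ _ _ => (0:ℝ)) P hP0 hP1).continuous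
  have hFz : F z = z := by
    have h1 : Tendsto (fun j => ‖F (y (φ j)) - y (φ j)‖) atTop (𝓝 ‖F z - z‖) :=
      (Tendsto.sub ((hFcont.tendsto z).comp hlim) hlim).norm
    have h2 : Tendsto (fun j => ‖F (y (φ j)) - y (φ j)‖) atTop (𝓝 0) := by
      have hb : Tendsto (fun j : ℕ => C / ((φ j : ℝ) + 1)) atTop (𝓝 0) := by
        have h3 : Tendsto (fun j : ℕ => 1 / ((j : ℝ) + 1)) atTop (𝓝 0) :=
          tendsto_one_div_add_atTop_nhds_zero_nat
        have h4 := (h3.comp hφ.tendsto_atTop).const_mul C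
        simpa [div_eq_mul_inv, one_div, mul_comm] using h4
      exact squeeze_zero (fun j => norm_nonneg _) (fun j => hFy (φ j)) hb
    have h5 := tendsto_nhds_unique h1 h2
    have h6 : F z - z = 0 := by rwa [norm_eq_zero] at h5
    exact sub_eq_zero.mp h6
  -- the limit has Hilbert seminorm 1
  have hωy : ∀ k, (⨆ i, y k i) - (⨅ i, y k i) = 1 := by
    intro k
    have hinv : (0:ℝ) ≤ (ω k)⁻¹ := le_of_lt (inv_pos.mpr (hωpos k))
    have hsup : (⨆ i, y k i) = (ω k)⁻¹ * ((⨆ i, W k i) + (-(bot k))) := by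
      have : ∀ i, y k i = (ω k)⁻¹ * (W k i + (-(bot k))) := by
        intro i; simp [hy, mul_one]; ring
      simp_rw [this]
      rw [iSup_const_mul _ hinv, iSup_add_const]
    have hinf : (⨅ i, y k i) = (ω k)⁻¹ * ((⨅ i, W k i) + (-(bot k))) := by
      have : ∀ i, y k i = (ω k)⁻¹ * (W k i + (-(bot k))) := by
        intro i; simp [hy, mul_one]; ring
      simp_rw [this]
      rw [iInf_const_mul _ hinv, iInf_add_const]
    rw [hsup, hinf, hbot]
    have : (ω k) * (ω k)⁻¹ = 1 := mul_inv_cancel₀ (ne_of_gt (hωpos k))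
    rw [hω] at this ⊢
    nlinarith [this]
  have homega_lip : ∀ a b : Fin n → ℝ,
      |((⨆ i, a i) - (⨅ i, a i)) - ((⨆ i, b i) - (⨅ i, b i))| ≤ 2 * dist a b := by
    intro a b
    have hab : ∀ j, |a j - b j| ≤ dist a b := fun j => by
      rw [← Real.dist_eq]; exact dist_le_pi_dist a b j
    have h1 : (⨆ i, a i) ≤ (⨆ i, b i) + dist a b := by
      rw [← iSup_add_const]
      exact fin_iSup_mono fun i => by have := (abs_le.mp (hab i)).2; linarith
    have h2 : (⨆ i, b i) ≤ (⨆ i, a i) + dist a b := by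
      rw [← iSup_add_const]
      exact fin_iSup_mono fun i => by have := (abs_le.mp (hab i)).1; linarith
    have h3 : (⨅ i, a i) ≤ (⨅ i, b i) + dist a b := by
      rw [← iInf_add_const]
      exact fin_iInf_mono fun i => by have := (abs_le.mp (hab i)).2; linarith
    have h4 : (⨅ i, b i) ≤ (⨅ i, a i) + dist a b := by
      rw [← iInf_add_const]
      exact fin_iInf_mono fun i => by have := (abs_le.mp (hab i)).1; linarith
    rw [abs_le]; constructor <;> linarith
  have hωz : (⨆ i, z i) - (⨅ i, z i) = 1 := by
    have h1 : Tendsto (fun j => (⨆ i, y (φ j) i) - (⨅ i, y (φ j) i)) atTop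
        (𝓝 ((⨆ i, z i) - (⨅ i, z i))) := by
      rw [tendsto_iff_dist_tendsto_zero]
      apply squeeze_zero (fun j => dist_nonneg)
        (g := fun j => 2 * dist (y (φ j)) z)
      · intro j
        rw [Real.dist_eq]
        exact homega_lip (y (φ j)) z
      · have : Tendsto (fun j => dist (y (φ j)) z) atTop (𝓝 0) := by
          rwa [tendsto_iff_dist_tendsto_zero] at hlim
        simpa using this.const_mul 2
    have h2 : Tendsto (fun j : ℕ => (1:ℝ)) atTop (𝓝 1) := tendsto_const_nhds
    have h3 : (fun j => (⨆ i, y (φ j) i) - (⨅ i, y (φ j) i)) = fun j : ℕ => (1:ℝ) := by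
      funext j; exact hωy (φ j)
    rw [h3] at h1
    exact tendsto_nhds_unique h1 h2
  obtain ⟨c, hc⟩ := hfix z hFz
  rw [hc] at hωz
  simp only [Pi.smul_apply, Pi.one_apply, smul_eq_mul, mul_one, ciSup_const, ciInf_const] at hωz
  linarith


lemma dir21 (hP0 : ∀ i a b j, 0 ≤ P i a b j) (hP1 : ∀ i a b, ∑ j, P i a b j = 1)
    (hfix : ∀ x : Fin n → ℝ, shapley (fun _ _ _ => (0 : ℝ)) P x = x →
        ∃ c : ℝ, x = c • (1 : Fin n → ℝ)) :
    ∀ r : ∀ i (a : A i), B i a → ℝ, ∃ (u : Fin n → ℝ) (lam : ℝ),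
        shapley r P u = lam • (1 : Fin n → ℝ) + u := by
  intro r
  rcases Nat.eq_zero_or_pos n with hn | hn
  · subst hn
    exact ⟨0, 0, funext fun i => i.elim0⟩
  haveI hne : Nonempty (Fin n) := Fin.pos_iff_nonempty.mp hn
  set T := shapley r P with hT
  -- a uniform bound on the payments
  obtain ⟨R0, hR0b⟩ := (Set.finite_range
    (fun p : (Σ i : Fin n, Σ a : A i, B i a) => |r p.1 p.2.1 p.2.2|)).bddAbove
  set R := max R0 0 with hRdef
  have hR : ∀ i a b, |r i a b| ≤ R := fun i a b =>
    le_trans (hR0b ⟨⟨i, a, b⟩, rfl⟩) (le_max_left _ _)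
  have hRnn : (0:ℝ) ≤ R := le_max_right _ _
  set lmin := ⨅ i, T 0 i with hlmin
  set mu := ⨆ i, T 0 i with hmu
  -- the slice space is invariant under T and contains the orbit of 0
  have hS0 : ∀ i, lmin + (0 : Fin n → ℝ) i ≤ T 0 i ∧ T 0 i ≤ mu + (0 : Fin n → ℝ) i := by
    intro i
    constructor
    · simpa using fin_iInf_le (fun i => T 0 i) i
    · simpa using fin_le_iSup (fun i => T 0 i) i
  have hSstep : ∀ x : Fin n → ℝ, (∀ i, lmin + x i ≤ T x i ∧ T x i ≤ mu + x i) →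
      (∀ i, lmin + T x i ≤ T (T x) i ∧ T (T x) i ≤ mu + T x i) := by
    intro x hx i
    constructor
    · have := shap_le_of_le r P hP0 hP1 (x := x) (y := T x) (d := -lmin)
        (fun j => by have := (hx j).1; linarith) i
      rw [← hT] at this
      linarith
    · have := shap_le_of_le r P hP0 hP1 (x := T x) (y := x) (d := mu)
        (fun j => by have := (hx j).2; linarith) i
      rw [← hT] at this
      linarith
  have hSiter : ∀ k : ℕ, ∀ i, lmin + T^[k] 0 i ≤ T (T^[k] 0) i ∧
      T (T^[k] 0) i ≤ mu + T^[k] 0 i := by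
    intro k
    induction k with
    | zero => simpa using hS0
    | succ k ih =>
      have := hSstep _ ih
      simpa [Function.iterate_succ_apply'] using this
  obtain ⟨M, hM0, hMS⟩ := omega_bound P hP0 hP1 r hfix (lmin := lmin) (mu := mu) hRnn hR
  have hMS' : ∀ k : ℕ, (⨆ i, T^[k] 0 i) - (⨅ i, T^[k] 0 i) ≤ M := by
    intro k
    exact hMS _ (fun i => hSiter k i)
  -- sup/inf of the orbit, sub/super-additivity
  set a : ℕ → ℝ := fun k => ⨆ i, T^[k] 0 i with ha
  set b : ℕ → ℝ := fun k => ⨅ i, T^[k] 0 i with hb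
  have hab : ∀ k, a k - b k ≤ M := hMS'
  have hba : ∀ k, b k ≤ a k := fun k =>
    le_trans (fin_iInf_le _ (Classical.arbitrary (Fin n))) (fin_le_iSup _ _)
  have hsub : ∀ k m, a (k + m) ≤ a k + a m := by
    intro k m
    have h1 : ∀ i, T^[k + m] 0 i ≤ T^[k] 0 i + a m := by
      intro i
      rw [Function.iterate_add_apply]
      exact shap_iter_le_of_le r P hP0 hP1 k (x := T^[m] 0) (y := 0) (d := a m)
        (fun j => by simpa using fin_le_iSup (fun i => T^[m] 0 i) j) i
    calc a (k + m) ≤ ⨆ i, (T^[k] 0 i + a m) := fin_iSup_mono h1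
      _ = a k + a m := iSup_add_const _ _
  have hsuper : ∀ k m, b k + b m ≤ b (k + m) := by
    intro k m
    have h1 : ∀ i, T^[k] 0 i + b m ≤ T^[k + m] 0 i := by
      intro i
      rw [Function.iterate_add_apply]
      have := shap_iter_le_of_le r P hP0 hP1 k (x := (0 : Fin n → ℝ)) (y := T^[m] 0)
        (d := -(b m)) (fun j => by
          have := fin_iInf_le (fun i => T^[m] 0 i) j
          simp only [Pi.zero_apply]; linarith) i
      linarith
    calc b k + b m = ⨅ i, (T^[k] 0 i + b m) := (iInf_add_const _ _).symm
      _ ≤ b (k + m) := fin_iInf_mono h1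
  have hmulA : ∀ m k : ℕ, a (m * k) ≤ (m : ℝ) * a k := by
    intro m k
    induction m with
    | zero => simp [ha]
    | succ m ih =>
      have h1 : (m + 1) * k = m * k + k := by ring
      rw [h1]
      calc a (m * k + k) ≤ a (m * k) + a k := hsub _ _
        _ ≤ (m : ℝ) * a k + a k := by linarith
        _ = ((m + 1 : ℕ) : ℝ) * a k := by push_cast; ring
  have hmulB : ∀ m k : ℕ, (m : ℝ) * b k ≤ b (m * k) := by
    intro m k
    induction m with
    | zero => simp [hb]
    | succ m ih =>
      have h1 : (m + 1) * k = m * k + k := by ring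
      rw [h1]
      calc ((m + 1 : ℕ) : ℝ) * b k = (m : ℝ) * b k + b k := by push_cast; ring
        _ ≤ b (m * k) + b k := by linarith
        _ ≤ b (m * k + k) := by have := hsuper (m * k) k; linarith
  -- the mean payoff
  have hbddlam : BddBelow (Set.range fun k : ℕ => a (k + 1) / ((k : ℝ) + 1)) := by
    refine ⟨b 1, ?_⟩
    rintro v ⟨k, rfl⟩
    have h1 : ((k + 1 : ℕ) : ℝ) * b 1 ≤ b ((k + 1) * 1) := hmulB (k + 1) 1
    rw [mul_one] at h1
    have h2 : b (k + 1) ≤ a (k + 1) := hba _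
    rw [le_div_iff₀ (by positivity : (0:ℝ) < (k : ℝ) + 1)]
    push_cast at h1
    linarith
  set lam := ⨅ k : ℕ, a (k + 1) / ((k : ℝ) + 1) with hlamdef
  have hlam_le : ∀ k : ℕ, ((k : ℝ) + 1) * lam ≤ a (k + 1) := by
    intro k
    have h1 : lam ≤ a (k + 1) / ((k : ℝ) + 1) := ciInf_le hbddlam k
    have h2 : (0:ℝ) < (k : ℝ) + 1 := by positivity
    rw [le_div_iff₀ h2] at h1
    linarith
  have hlam_ge : ∀ k : ℕ, b (k + 1) ≤ ((k : ℝ) + 1) * lam := by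
    intro k
    have hkpos : (0:ℝ) < (k : ℝ) + 1 := by positivity
    have h1 : b (k + 1) / ((k : ℝ) + 1) ≤ lam := by
      apply le_ciInf
      intro m
      have hmpos : (0:ℝ) < (m : ℝ) + 1 := by positivity
      have h2 : ((m + 1 : ℕ) : ℝ) * b (k + 1) ≤ b ((m + 1) * (k + 1)) := hmulB _ _
      have h3 : b ((m + 1) * (k + 1)) ≤ a ((m + 1) * (k + 1)) := hba _
      have h4 : a ((m + 1) * (k + 1)) ≤ ((k + 1 : ℕ) : ℝ) * a (m + 1) := by
        rw [Nat.mul_comm]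
        exact hmulA _ _
      rw [div_le_div_iff₀ hkpos hmpos]
      push_cast at h2 h4
      nlinarith
    rw [div_le_iff₀ hkpos] at h1
    linarith
  -- coordinates of the orbit stay within M of k * lam
  have hbound : ∀ (k : ℕ) (i : Fin n), |T^[k] 0 i - (k : ℝ) * lam| ≤ M := by
    intro k i
    cases k with
    | zero => simpa using hM0
    | succ k =>
      have h1 : T^[k + 1] 0 i ≤ a (k + 1) := fin_le_iSup _ i
      have h2 : b (k + 1) ≤ T^[k + 1] 0 i := fin_iInf_le _ i
      have h3 := hlam_le k
      have h4 := hlam_ge k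
      have h5 := hab (k + 1)
      rw [abs_le]
      push_cast
      constructor <;> linarith
  -- the normalized operator has a fixed point
  have hfLip : LipschitzWith 1 (fun y : Fin n → ℝ => T y - lam • (1 : Fin n → ℝ)) := by
    refine LipschitzWith.of_dist_le_mul fun x y => ?_
    have h1 : dist (T x - lam • (1 : Fin n → ℝ)) (T y - lam • (1 : Fin n → ℝ))
        = dist (T x) (T y) := dist_sub_right _ _ _
    rw [NNReal.coe_one, one_mul]
    calc dist ((fun y : Fin n → ℝ => T y - lam • (1 : Fin n → ℝ)) x)
          ((fun y : Fin n → ℝ => T y - lam • (1 : Fin n → ℝ)) y) = dist (T x) (T y) := h1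
      _ ≤ dist x y := by
          have := (shap_lipschitz r P hP0 hP1).dist_le_mul x y
          rw [NNReal.coe_one, one_mul] at this
          rw [hT]
          exact this
  have hforb : ∀ k : ℕ, (fun y : Fin n → ℝ => T y - lam • (1 : Fin n → ℝ))^[k] 0
      = T^[k] 0 - ((k : ℝ) * lam) • (1 : Fin n → ℝ) := by
    intro k
    induction k with
    | zero => simp
    | succ k ih =>
      rw [Function.iterate_succ_apply', ih]
      show T (T^[k] 0 - ((k : ℝ) * lam) • (1 : Fin n → ℝ)) - lam • (1 : Fin n → ℝ)
        = T^[k + 1] 0 - (((k + 1 : ℕ) : ℝ) * lam) • (1 : Fin n → ℝ)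
      have harg : T^[k] 0 - ((k : ℝ) * lam) • (1 : Fin n → ℝ)
          = T^[k] 0 + (-((k : ℝ) * lam)) • (1 : Fin n → ℝ) := by module
      rw [harg, hT, shap_add_const r P hP1, ← hT, Function.iterate_succ_apply' T k 0]
      push_cast
      module
  have horb : ∀ k : ℕ, ‖(fun y : Fin n → ℝ => T y - lam • (1 : Fin n → ℝ))^[k] 0‖ ≤ M := by
    intro k
    rw [hforb k, pi_norm_le_iff_of_nonneg hM0]
    intro i
    rw [Real.norm_eq_abs]
    have : (T^[k] 0 - ((k : ℝ) * lam) • (1 : Fin n → ℝ)) i = T^[k] 0 i - (k : ℝ) * lam := by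
      simp [mul_one]
    rw [this]
    exact hbound k i
  obtain ⟨u, hufix⟩ := nonexp_fixed_of_bounded_orbit
    (fun y : Fin n → ℝ => T y - lam • (1 : Fin n → ℝ)) hfLip M horb
  refine ⟨u, lam, ?_⟩
  have h2 : T u - lam • (1 : Fin n → ℝ) = u := hufix
  show T u = lam • (1 : Fin n → ℝ) + u
  nth_rewrite 2 [← h2]
  module

end Main

/-- with the state space, action sets and transition probabilities fixed,
the Shapley operator `T_r` has an eigenpair for every value of the transition payments
`r` if and only if every fixed point of the payment-free Shapley operator is
proportional to the all-ones vector. -/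
theorem shapley_eigenpair_forall_payments_iff_paymentFree_trivial_fixedPoints
    {n : ℕ} {A : Fin n → Type*} {B : ∀ i, A i → Type*}
    [∀ i, Fintype (A i)] [∀ i, Nonempty (A i)]
    [∀ i a, Fintype (B i a)] [∀ i a, Nonempty (B i a)]
    (P : ∀ i (a : A i), B i a → Fin n → ℝ)
    (hP0 : ∀ i a b j, 0 ≤ P i a b j)
    (hP1 : ∀ i a b, ∑ j, P i a b j = 1) :
    (∀ r : ∀ i (a : A i), B i a → ℝ, ∃ (u : Fin n → ℝ) (lam : ℝ),
        shapley r P u = lam • (1 : Fin n → ℝ) + u) ↔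
    (∀ x : Fin n → ℝ, shapley (fun _ _ _ => (0 : ℝ)) P x = x →
        ∃ c : ℝ, x = c • (1 : Fin n → ℝ)) := by
  constructor
  · exact dir12 P hP0 hP1
  · exact dir21 P hP0 hP1
end

section
/- Whether a payment-free Shapley operator has only trivial fixed points depends only on the supports of the transition probabilities: if (P_i^{ab}) and (Q_i^{ab}) are two families of transition probability vectors over the same state space S = {1,…,n} and the same action sets, such that for all i, j, a, b one has P_{ij}^{ab} > 0 if and only if Q_{ij}^{ab} > 0, then every fixed point of the payment-free operator F_P is proportional to 𝟏 if and only if every fixed point of the payment-free operator F_Q is proportional to 𝟏. -/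
/-- The payment-free Shapley operator associated with transition probabilities `P`:
`[F(x)]_i = min_a max_b Σ_j P_{ij}^{ab} x_j`. -/
noncomputable def paymentFreeShapley {n : ℕ} {A : Fin n → Type*} {B : ∀ i, A i → Type*}
    [∀ i, Fintype (A i)] [∀ i, Nonempty (A i)]
    [∀ i a, Fintype (B i a)] [∀ i a, Nonempty (B i a)]
    (P : ∀ i (a : A i), B i a → Fin n → ℝ) :
    (Fin n → ℝ) → (Fin n → ℝ) :=
  fun x i => ⨅ a : A i, ⨆ b : B i a, ∑ j, P i a b j * x j


open Filter Finset

section Aux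

variable {n : ℕ} {A : Fin n → Type*} {B : ∀ i, A i → Type*}
    [∀ i, Fintype (A i)] [∀ i, Nonempty (A i)]
    [∀ i a, Fintype (B i a)] [∀ i a, Nonempty (B i a)]

private lemma pfs_def (P : ∀ i (a : A i), B i a → Fin n → ℝ) (x : Fin n → ℝ) (i : Fin n) :
    paymentFreeShapley P x i = ⨅ a : A i, ⨆ b : B i a, ∑ j, P i a b j * x j := rfl

private lemma exists_eq_ciInf {α : Type*} [Finite α] [Nonempty α] (f : α → ℝ) :
    ∃ a, (⨅ a', f a') = f a ∧ ∀ b, f a ≤ f b := by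
  obtain ⟨a, ha⟩ := Finite.exists_min f
  exact ⟨a, le_antisymm (ciInf_le (Finite.bddBelow_range f) a) (le_ciInf ha), ha⟩

private lemma exists_eq_ciSup {α : Type*} [Finite α] [Nonempty α] (f : α → ℝ) :
    ∃ a, (⨆ a', f a') = f a ∧ ∀ b, f b ≤ f a := by
  obtain ⟨a, ha⟩ := Finite.exists_max f
  exact ⟨a, le_antisymm (ciSup_le ha) (le_ciSup (Finite.bddAbove_range f) a), ha⟩

variable (P : ∀ i (a : A i), B i a → Fin n → ℝ)

private lemma sum_le_of_le (hP0 : ∀ i a b j, 0 ≤ P i a b j) (hP1 : ∀ i a b, ∑ j, P i a b j = 1)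
    {x : Fin n → ℝ} {M : ℝ} (hx : ∀ j, x j ≤ M) (i : Fin n) (a : A i) (b : B i a) :
    ∑ j, P i a b j * x j ≤ M := by
  calc ∑ j, P i a b j * x j ≤ ∑ j, P i a b j * M :=
        Finset.sum_le_sum fun j _ => mul_le_mul_of_nonneg_left (hx j) (hP0 i a b j)
    _ = M := by rw [← Finset.sum_mul, hP1, one_mul]

private lemma le_sum_of_le (hP0 : ∀ i a b j, 0 ≤ P i a b j) (hP1 : ∀ i a b, ∑ j, P i a b j = 1)
    {x : Fin n → ℝ} {m : ℝ} (hx : ∀ j, m ≤ x j) (i : Fin n) (a : A i) (b : B i a) :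
    m ≤ ∑ j, P i a b j * x j := by
  calc m = ∑ j, P i a b j * m := by rw [← Finset.sum_mul, hP1, one_mul]
    _ ≤ ∑ j, P i a b j * x j :=
        Finset.sum_le_sum fun j _ => mul_le_mul_of_nonneg_left (hx j) (hP0 i a b j)

private lemma pfs_le_of_le (hP0 : ∀ i a b j, 0 ≤ P i a b j) (hP1 : ∀ i a b, ∑ j, P i a b j = 1)
    {x : Fin n → ℝ} {M : ℝ} (hx : ∀ j, x j ≤ M) (i : Fin n) :
    paymentFreeShapley P x i ≤ M := by
  rw [pfs_def]
  obtain ⟨a⟩ := ‹∀ i, Nonempty (A i)› i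
  exact (ciInf_le (Finite.bddBelow_range _) a).trans
    (ciSup_le fun b => sum_le_of_le P hP0 hP1 hx i a b)

private lemma le_pfs_of_le (hP0 : ∀ i a b j, 0 ≤ P i a b j) (hP1 : ∀ i a b, ∑ j, P i a b j = 1)
    {x : Fin n → ℝ} {m : ℝ} (hx : ∀ j, m ≤ x j) (i : Fin n) :
    m ≤ paymentFreeShapley P x i := by
  rw [pfs_def]
  refine le_ciInf fun a => ?_
  obtain ⟨b⟩ := ‹∀ i a, Nonempty (B i a)› i a
  exact (le_sum_of_le P hP0 hP1 hx i a b).trans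
    (le_ciSup (f := fun b : B i a => ∑ j, P i a b j * x j) (Finite.bddAbove_range _) b)

private lemma pfs_mono (hP0 : ∀ i a b j, 0 ≤ P i a b j)
    {x y : Fin n → ℝ} (hxy : x ≤ y) : paymentFreeShapley P x ≤ paymentFreeShapley P y := by
  intro i
  rw [pfs_def, pfs_def]
  refine ciInf_mono (Finite.bddBelow_range _) fun a => ?_
  refine ciSup_mono (Finite.bddAbove_range _) fun b => ?_
  exact Finset.sum_le_sum fun j _ => mul_le_mul_of_nonneg_left (hxy j) (hP0 i a b j)

private lemma pfs_continuous : Continuous (paymentFreeShapley P) := by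
  refine continuous_pi fun i => ?_
  have h : (fun x => paymentFreeShapley P x i) =
      Finset.univ.inf' Finset.univ_nonempty (fun a : A i =>
        Finset.univ.sup' Finset.univ_nonempty fun b : B i a =>
          fun x : Fin n → ℝ => ∑ j, P i a b j * x j) := by
    funext x
    rw [pfs_def]
    rw [Finset.inf'_apply]
    simp only [Finset.sup'_apply]
    simp only [Finset.inf'_univ_eq_ciInf, Finset.sup'_univ_eq_ciSup]
  rw [h]
  refine Continuous.finset_inf' Finset.univ_nonempty fun a _ => ?_
  refine Continuous.finset_sup' Finset.univ_nonempty fun b _ => ?_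
  exact continuous_finset_sum _ fun j _ => (continuous_const.mul (continuous_apply j))

/-- Fixed point not proportional to 1 yields a pair of dominions. -/
private lemma exists_pair (hP0 : ∀ i a b j, 0 ≤ P i a b j) (hP1 : ∀ i a b, ∑ j, P i a b j = 1)
    (x : Fin n → ℝ) (hx : paymentFreeShapley P x = x)
    (hnc : ¬ ∃ c : ℝ, x = c • (1 : Fin n → ℝ)) :
    ∃ T T' : Set (Fin n), T.Nonempty ∧ T'.Nonempty ∧ Disjoint T T' ∧
      (∀ i ∈ T, ∀ a : A i, ∃ b : B i a, ∀ j, 0 < P i a b j → j ∈ T) ∧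
      (∀ i ∈ T', ∃ a : A i, ∀ b : B i a, ∀ j, 0 < P i a b j → j ∈ T') := by
  have hne : ∃ i j, x i ≠ x j := by
    by_contra h
    push_neg at h
    rcases isEmpty_or_nonempty (Fin n) with he | hne
    · exact hnc ⟨0, funext fun j => (IsEmpty.elim he j)⟩
    · obtain ⟨i0⟩ := hne
      exact hnc ⟨x i0, funext fun j => by simp [h j i0]⟩
  obtain ⟨i1, j1, hij⟩ := hne
  haveI : Nonempty (Fin n) := ⟨i1⟩
  obtain ⟨imax, hmax⟩ := Finite.exists_max x
  obtain ⟨imin, hmin⟩ := Finite.exists_min x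
  set M := x imax with hM
  set m := x imin with hm
-- continuing exists_pair
  have hall : m = M → ∀ k, x k = M := fun h k => le_antisymm (hmax k) (h ▸ hmin k)
  have hmM : m ≠ M := fun h => hij ((hall h i1).trans (hall h j1).symm)
  refine ⟨{i | x i = M}, {i | x i = m}, ⟨imax, rfl⟩, ⟨imin, rfl⟩, ?_, ?_, ?_⟩
  · rw [Set.disjoint_left]
    rintro i (hi : x i = M) (hi' : x i = m)
    exact hmM (hi'.symm.trans hi)
  · rintro i (hi : x i = M) a
    have hfix : (⨅ a : A i, ⨆ b : B i a, ∑ j, P i a b j * x j) = M := by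
      rw [← pfs_def, hx, hi]
    have hub : ∀ b : B i a, ∑ j, P i a b j * x j ≤ M :=
      fun b => sum_le_of_le P hP0 hP1 hmax i a b
    have h1 : M ≤ ⨆ b : B i a, ∑ j, P i a b j * x j :=
      hfix ▸ ciInf_le (Finite.bddBelow_range _) a
    obtain ⟨b, hb, -⟩ := exists_eq_ciSup (fun b : B i a => ∑ j, P i a b j * x j)
    have hbM : ∑ j, P i a b j * x j = M := le_antisymm (hub b) (hb ▸ h1)
    refine ⟨b, fun j hj => ?_⟩
    have hzero : ∑ j, P i a b j * (M - x j) = 0 := by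
      have : ∑ j, P i a b j * (M - x j)
          = (∑ j, P i a b j * M) - ∑ j, P i a b j * x j := by
        rw [← Finset.sum_sub_distrib]
        exact Finset.sum_congr rfl fun j _ => by ring
      rw [this, ← Finset.sum_mul, hP1, one_mul, hbM, sub_self]
    have hterm := (Finset.sum_eq_zero_iff_of_nonneg
      (fun j _ => mul_nonneg (hP0 i a b j) (sub_nonneg.mpr (hmax j)))).mp hzero j (Finset.mem_univ j)
    have : M - x j = 0 := by
      rcases mul_eq_zero.mp hterm with h | h
      · exact absurd h (ne_of_gt hj)
      · exact h
    exact (sub_eq_zero.mp this).symm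
  · rintro i (hi : x i = m)
    have hfix : (⨅ a : A i, ⨆ b : B i a, ∑ j, P i a b j * x j) = m := by
      rw [← pfs_def, hx, hi]
    obtain ⟨a, ha, -⟩ := exists_eq_ciInf (fun a : A i => ⨆ b : B i a, ∑ j, P i a b j * x j)
    refine ⟨a, fun b j hj => ?_⟩
    have hub : ∑ j, P i a b j * x j ≤ m :=
      (le_ciSup (Finite.bddAbove_range _) b).trans (ha ▸ hfix).le
    have hbm : ∑ j, P i a b j * x j = m :=
      le_antisymm hub (le_sum_of_le P hP0 hP1 hmin i a b)
    have hzero : ∑ j, P i a b j * (x j - m) = 0 := by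
      have : ∑ j, P i a b j * (x j - m)
          = (∑ j, P i a b j * x j) - ∑ j, P i a b j * m := by
        rw [← Finset.sum_sub_distrib]
        exact Finset.sum_congr rfl fun j _ => by ring
      rw [this, ← Finset.sum_mul, hP1, one_mul, hbm, sub_self]
    have hterm := (Finset.sum_eq_zero_iff_of_nonneg
      (fun j _ => mul_nonneg (hP0 i a b j) (sub_nonneg.mpr (hmin j)))).mp hzero j (Finset.mem_univ j)
    have : x j - m = 0 := by
      rcases mul_eq_zero.mp hterm with h | h
      · exact absurd h (ne_of_gt hj)
      · exact h
    exact sub_eq_zero.mp this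

/-- A pair of dominions yields a fixed point not proportional to 1. -/
private lemma exists_fixed (hP0 : ∀ i a b j, 0 ≤ P i a b j) (hP1 : ∀ i a b, ∑ j, P i a b j = 1)
    (T T' : Set (Fin n)) (hTne : T.Nonempty) (hT'ne : T'.Nonempty) (hdisj : Disjoint T T')
    (hT : ∀ i ∈ T, ∀ a : A i, ∃ b : B i a, ∀ j, 0 < P i a b j → j ∈ T)
    (hT' : ∀ i ∈ T', ∃ a : A i, ∀ b : B i a, ∀ j, 0 < P i a b j → j ∈ T') :
    ∃ x : Fin n → ℝ, paymentFreeShapley P x = x ∧ ¬ ∃ c : ℝ, x = c • (1 : Fin n → ℝ) := by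
  classical
  -- the invariant set
  set K : (Fin n → ℝ) → Prop := fun x =>
    (∀ i, 0 ≤ x i) ∧ (∀ i, x i ≤ 1) ∧ (∀ i ∈ T, x i = 1) ∧ (∀ i ∈ T', x i = 0) with hK
  -- P vanishes outside a set containing the support
  have hvan : ∀ (i) (a : A i) (b : B i a) (S : Set (Fin n)),
      (∀ j, 0 < P i a b j → j ∈ S) → ∀ j ∉ S, P i a b j = 0 := by
    intro i a b S hS j hj
    rcases (hP0 i a b j).eq_or_lt with h | h
    · exact h.symm
    · exact absurd (hS j h) hj
  -- K is preserved
  have hKpres : ∀ x, K x → K (paymentFreeShapley P x) := by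
    rintro x ⟨h0, h1, hxT, hxT'⟩
    refine ⟨fun i => le_pfs_of_le P hP0 hP1 h0 i, fun i => pfs_le_of_le P hP0 hP1 h1 i,
      ?_, ?_⟩
    · intro i hi
      refine le_antisymm (pfs_le_of_le P hP0 hP1 h1 i) ?_
      rw [pfs_def]
      refine le_ciInf fun a => ?_
      obtain ⟨b, hb⟩ := hT i hi a
      have hsum : ∑ j, P i a b j * x j = 1 := by
        have : ∑ j, P i a b j * x j = ∑ j, P i a b j := by
          refine Finset.sum_congr rfl fun j _ => ?_
          by_cases hj : j ∈ T
          · rw [hxT j hj, mul_one]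
          · rw [hvan i a b T hb j hj, zero_mul]
        rw [this, hP1]
      exact hsum ▸ le_ciSup (f := fun b : B i a => ∑ j, P i a b j * x j)
        (Finite.bddAbove_range _) b
    · intro i hi
      refine le_antisymm ?_ (le_pfs_of_le P hP0 hP1 h0 i)
      rw [pfs_def]
      obtain ⟨a, ha⟩ := hT' i hi
      refine ciInf_le_of_le (Finite.bddBelow_range _) a (ciSup_le fun b => le_of_eq ?_)
      refine Finset.sum_eq_zero fun j _ => ?_
      by_cases hj : j ∈ T'
      · rw [hxT' j hj, mul_zero]
      · rw [hvan i a b T' (ha b) j hj, zero_mul]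
  -- starting point
  set x0 : Fin n → ℝ := fun i => if i ∈ T' then 0 else 1 with hx0
  have hKx0 : K x0 := by
    refine ⟨fun i => ?_, fun i => ?_, fun i hi => ?_, fun i hi => ?_⟩
    · by_cases h : i ∈ T' <;> simp [hx0, h]
    · by_cases h : i ∈ T' <;> simp [hx0, h]
    · have : i ∉ T' := fun h => Set.disjoint_left.mp hdisj hi h
      simp [hx0, this]
    · simp [hx0, hi]
  -- the iteration
  set u : ℕ → (Fin n → ℝ) := fun k => (paymentFreeShapley P)^[k] x0 with hu
  have husucc : ∀ k, u (k + 1) = paymentFreeShapley P (u k) := fun k =>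
    Function.iterate_succ_apply' _ k x0
  have hKu : ∀ k, K (u k) := by
    intro k
    induction k with
    | zero => exact hKx0
    | succ k ih => rw [husucc]; exact hKpres _ ih
  have hstep : paymentFreeShapley P x0 ≤ x0 := by
    intro i
    by_cases hi : i ∈ T'
    · rw [(hKpres x0 hKx0).2.2.2 i hi]
      simp [hx0, hi]
    · have := (hKpres x0 hKx0).2.1 i
      simpa [hx0, hi] using this
  have hanti : Antitone u := by
    refine antitone_nat_of_succ_le fun k => ?_
    induction k with
    | zero => rw [husucc]; exact hstep
    | succ k ih =>
        calc u (k + 1 + 1) = paymentFreeShapley P (u (k + 1)) := husucc _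
          _ ≤ paymentFreeShapley P (u k) := pfs_mono P hP0 ih
          _ = u (k + 1) := (husucc _).symm
  -- the limit
  set xs : Fin n → ℝ := fun i => ⨅ k, u k i with hxs
  have hbdd : ∀ i, BddBelow (Set.range fun k => u k i) :=
    fun i => ⟨0, by rintro r ⟨k, rfl⟩; exact (hKu k).1 i⟩
  have htendi : ∀ i, Tendsto (fun k => u k i) atTop (nhds (xs i)) := fun i =>
    tendsto_atTop_ciInf (fun k l hkl => hanti hkl i) (hbdd i)
  have htend : Tendsto u atTop (nhds xs) := tendsto_pi_nhds.mpr htendi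
  have hfix : paymentFreeShapley P xs = xs := by
    have h1 : Tendsto (fun k => u (k + 1)) atTop (nhds xs) :=
      htend.comp (tendsto_add_atTop_nat 1)
    have h2 : Tendsto (fun k => paymentFreeShapley P (u k)) atTop
        (nhds (paymentFreeShapley P xs)) := ((pfs_continuous P).tendsto xs).comp htend
    have h3 : (fun k => u (k + 1)) = fun k => paymentFreeShapley P (u k) :=
      funext husucc
    exact tendsto_nhds_unique h2 (h3 ▸ h1)
  refine ⟨xs, hfix, ?_⟩
  rintro ⟨c, hc⟩
  obtain ⟨i, hi⟩ := hTne
  obtain ⟨i', hi'⟩ := hT'ne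
  have hxsi : xs i = 1 := by
    have : (fun k => u k i) = fun _ => (1 : ℝ) := funext fun k => (hKu k).2.2.1 i hi
    rw [hxs]; simp only [this, ciInf_const]
  have hxsi' : xs i' = 0 := by
    have : (fun k => u k i') = fun _ => (0 : ℝ) := funext fun k => (hKu k).2.2.2 i' hi'
    rw [hxs]; simp only [this, ciInf_const]
  have h1 : c = 1 := by
    have := congrFun hc i
    simpa [hxsi] using this.symm
  have h0 : c = 0 := by
    have := congrFun hc i'
    simpa [hxsi'] using this.symm
  rw [h1] at h0
  exact one_ne_zero h0

/-- One direction: triviality of fixed points transfers along equal supports. -/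
private lemma oneDir (Q : ∀ i (a : A i), B i a → Fin n → ℝ)
    (hP0 : ∀ i a b j, 0 ≤ P i a b j) (hP1 : ∀ i a b, ∑ j, P i a b j = 1)
    (hQ0 : ∀ i a b j, 0 ≤ Q i a b j) (hQ1 : ∀ i a b, ∑ j, Q i a b j = 1)
    (hsupp : ∀ i a b j, 0 < P i a b j ↔ 0 < Q i a b j)
    (hP : ∀ x : Fin n → ℝ, paymentFreeShapley P x = x → ∃ c : ℝ, x = c • (1 : Fin n → ℝ)) :
    ∀ x : Fin n → ℝ, paymentFreeShapley Q x = x → ∃ c : ℝ, x = c • (1 : Fin n → ℝ) := by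
  intro x hx
  by_contra hnc
  obtain ⟨T, T', hTne, hT'ne, hdisj, hT, hT'⟩ := exists_pair Q hQ0 hQ1 x hx hnc
  have hTP : ∀ i ∈ T, ∀ a : A i, ∃ b : B i a, ∀ j, 0 < P i a b j → j ∈ T := by
    intro i hi a
    obtain ⟨b, hb⟩ := hT i hi a
    exact ⟨b, fun j hj => hb j ((hsupp i a b j).mp hj)⟩
  have hT'P : ∀ i ∈ T', ∃ a : A i, ∀ b : B i a, ∀ j, 0 < P i a b j → j ∈ T' := by
    intro i hi
    obtain ⟨a, ha⟩ := hT' i hi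
    exact ⟨a, fun b j hj => ha b j ((hsupp i a b j).mp hj)⟩
  obtain ⟨y, hy, hyn⟩ := exists_fixed P hP0 hP1 T T' hTne hT'ne hdisj hTP hT'P
  exact hyn (hP y hy)

end Aux

/-- whether a payment-free Shapley operator has only trivial fixed points
(fixed points proportional to the all-ones vector) depends only on the supports of the
transition probabilities. -/
theorem paymentFree_trivial_fixedPoints_depends_only_on_support
    {n : ℕ} {A : Fin n → Type*} {B : ∀ i, A i → Type*}
    [∀ i, Fintype (A i)] [∀ i, Nonempty (A i)]
    [∀ i a, Fintype (B i a)] [∀ i a, Nonempty (B i a)]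
    (P Q : ∀ i (a : A i), B i a → Fin n → ℝ)
    (hP0 : ∀ i a b j, 0 ≤ P i a b j) (hP1 : ∀ i a b, ∑ j, P i a b j = 1)
    (hQ0 : ∀ i a b j, 0 ≤ Q i a b j) (hQ1 : ∀ i a b, ∑ j, Q i a b j = 1)
    (hsupp : ∀ i a b j, 0 < P i a b j ↔ 0 < Q i a b j) :
    (∀ x : Fin n → ℝ, paymentFreeShapley P x = x → ∃ c : ℝ, x = c • (1 : Fin n → ℝ)) ↔
    (∀ x : Fin n → ℝ, paymentFreeShapley Q x = x → ∃ c : ℝ, x = c • (1 : Fin n → ℝ)) := by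
  constructor
  · exact oneDir P Q hP0 hP1 hQ0 hQ1 hsupp
  · exact oneDir Q P hQ0 hQ1 hP0 hP1 (fun i a b j => (hsupp i a b j).symm)
end

section
/- Fix the state space, the finite action sets, and the transition probabilities, and identify the space of transition payments with ℝ^q, where q is the number of triples (i,a,b) with i ∈ S, a ∈ A_i, b ∈ B_{i,a}. Assume that for every transition payment r ∈ ℝ^q the Shapley operator T_r has an eigenpair. Then there exist finitely many nonzero linear functionals φ_1,…,φ_m on ℝ^q such that for every r ∈ ℝ^q with φ_k(r) ≠ 0 for all k = 1,…,m, the eigenvector of T_r is unique up to an additive constant: any two vectors u, v ∈ ℝⁿ satisfying T_r(u) = λ𝟏 + u and T_r(v) = μ𝟏 + v (for scalars λ, μ) differ by a constant multiple of 𝟏. -/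
open Finset Filter Topology

set_option linter.unusedSectionVars false

/-! ### Auxiliary lemmas -/

lemma exists_ciInf_eq' {ι : Type*} [Finite ι] [Nonempty ι] (f : ι → ℝ) :
    ∃ a, (⨅ x, f x) = f a ∧ ∀ x, f a ≤ f x := by
  obtain ⟨a, ha⟩ := Finite.exists_min f
  exact ⟨a, le_antisymm (ciInf_le (Set.finite_range f).bddBelow a) (le_ciInf ha), ha⟩

lemma exists_ciSup_eq' {ι : Type*} [Finite ι] [Nonempty ι] (f : ι → ℝ) :
    ∃ a, (⨆ x, f x) = f a ∧ ∀ x, f x ≤ f a := by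
  obtain ⟨a, ha⟩ := Finite.exists_max f
  exact ⟨a, le_antisymm (ciSup_le ha) (le_ciSup (Set.finite_range f).bddAbove a), ha⟩

/-- Every finite "stochastic-on-`F`" matrix whose rows from `F` stay in `F`
has an invariant probability vector supported on `F` (Cesàro average argument). -/
lemma exists_invariant {n : ℕ} (M : Fin n → Fin n → ℝ) (F : Finset (Fin n))
    (hne : F.Nonempty)
    (h0 : ∀ i ∈ F, ∀ j, 0 ≤ M i j)
    (h1 : ∀ i ∈ F, ∑ j, M i j = 1)
    (hcl : ∀ i ∈ F, ∀ j, M i j ≠ 0 → j ∈ F) :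
    ∃ π : Fin n → ℝ, (∀ i, i ∉ F → π i = 0) ∧ (∑ i, π i = 1) ∧
      (∀ j, ∑ i, π i * M i j = π j) := by
  classical
  obtain ⟨i0, hi0⟩ := hne
  set Q : Fin n → Fin n → ℝ := fun i j => if i ∈ F then M i j else if j = i then 1 else 0 with hQ
  have hQ0 : ∀ i j, 0 ≤ Q i j := by
    intro i j; simp only [hQ]
    split
    · exact h0 i ‹_› j
    · split <;> norm_num
  have hQ1 : ∀ i, ∑ j, Q i j = 1 := by
    intro i; simp only [hQ]
    by_cases hi : i ∈ F
    · simp only [if_pos hi]; exact h1 i hi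
    · simp [if_neg hi]
  have hQcl : ∀ i j, j ∉ F → Q i j ≠ 0 → i ∉ F := by
    intro i j hj hQne hi
    simp only [hQ, if_pos hi] at hQne
    exact hj (hcl i hi j hQne)
  set step : (Fin n → ℝ) → (Fin n → ℝ) := fun x j => ∑ i, x i * Q i j with hstepdef
  set μ : ℕ → Fin n → ℝ := fun t => step^[t] (fun i => if i = i0 then 1 else 0) with hμ
  have hμsucc : ∀ t, μ (t + 1) = step (μ t) := by
    intro t; simp only [hμ, Function.iterate_succ_apply']
  set K : Set (Fin n → ℝ) :=
    {x | (∀ i, 0 ≤ x i) ∧ (∀ i, i ∉ F → x i = 0) ∧ (∑ i, x i = 1)} with hK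
  have hstepK : ∀ x ∈ K, step x ∈ K := by
    rintro x ⟨hx0, hxs, hx1⟩
    refine ⟨fun j => Finset.sum_nonneg fun i _ => mul_nonneg (hx0 i) (hQ0 i j), ?_, ?_⟩
    · intro j hj
      refine Finset.sum_eq_zero fun i _ => ?_
      by_cases hQz : Q i j = 0
      · rw [hQz, mul_zero]
      · rw [hxs i (hQcl i j hj hQz), zero_mul]
    · rw [show (∑ j, step x j) = ∑ i, x i * ∑ j, Q i j by
        rw [Finset.sum_comm (s := Finset.univ) (t := Finset.univ) (f := fun j i => x i * Q i j)]
        exact Finset.sum_congr rfl fun i _ => (Finset.mul_sum _ _ _).symm]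
      simp only [hQ1, mul_one]; exact hx1
  have hμK : ∀ t, μ t ∈ K := by
    intro t; induction t with
    | zero =>
      refine ⟨fun i => by dsimp [μ]; split <;> norm_num, fun i hi => ?_, by simp [hμ]⟩
      dsimp [μ]; rw [if_neg]; rintro rfl; exact hi hi0
    | succ t ih => rw [hμsucc]; exact hstepK _ ih
  set ν : ℕ → Fin n → ℝ := fun k => (k+1 : ℝ)⁻¹ • ∑ t ∈ Finset.range (k+1), μ t with hν
  have hνK : ∀ k, ν k ∈ K := by
    intro k
    refine ⟨fun i => ?_, fun i hi => ?_, ?_⟩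
    · simp only [hν, Pi.smul_apply, Finset.sum_apply, smul_eq_mul]
      exact mul_nonneg (by positivity) (Finset.sum_nonneg fun t _ => (hμK t).1 i)
    · simp only [hν, Pi.smul_apply, Finset.sum_apply, smul_eq_mul]
      rw [Finset.sum_eq_zero fun t _ => (hμK t).2.1 i hi, mul_zero]
    · simp only [hν, Pi.smul_apply, Finset.sum_apply, smul_eq_mul]
      rw [← Finset.mul_sum, Finset.sum_comm]
      rw [Finset.sum_congr rfl fun t (_ : t ∈ Finset.range (k+1)) => (hμK t).2.2]
      simp only [Finset.sum_const, Finset.card_range, nsmul_eq_mul, mul_one]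
      field_simp
      norm_cast
  have hKcomp : IsCompact K := by
    have hcl2 : IsClosed K := by
      rw [hK, Set.setOf_and, Set.setOf_and]
      have h1' : IsClosed {x : Fin n → ℝ | ∀ i, 0 ≤ x i} := by
        rw [Set.setOf_forall]
        exact isClosed_iInter fun i => isClosed_le continuous_const (continuous_apply i)
      have h2' : IsClosed {x : Fin n → ℝ | ∀ i, i ∉ F → x i = 0} := by
        rw [Set.setOf_forall]
        refine isClosed_iInter fun i => ?_
        by_cases hi : i ∈ F
        · simp [hi]
        · simp only [hi, not_false_iff, forall_true_left]
          exact isClosed_eq (continuous_apply i) continuous_const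
      have h3' : IsClosed {x : Fin n → ℝ | ∑ i, x i = 1} :=
        isClosed_eq (continuous_finset_sum _ fun i _ => continuous_apply i) continuous_const
      exact h1'.inter (h2'.inter h3')
    refine (isCompact_closedBall (0 : Fin n → ℝ) 1).of_isClosed_subset hcl2 ?_
    rintro x ⟨hx0, _, hx1⟩
    rw [Metric.mem_closedBall, dist_zero_right]
    refine (pi_norm_le_iff_of_nonneg zero_le_one).2 fun i => ?_
    rw [Real.norm_eq_abs, abs_of_nonneg (hx0 i)]
    calc x i ≤ ∑ j, x j := Finset.single_le_sum (fun j _ => hx0 j) (Finset.mem_univ i)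
    _ = 1 := hx1
  obtain ⟨π, hπK, ψ, hψ, hlim⟩ := hKcomp.tendsto_subseq hνK
  have hstepν : ∀ k, step (ν k) = ν k + (k+1 : ℝ)⁻¹ • (μ (k+1) - μ 0) := by
    intro k
    funext j
    have key : ∑ t ∈ Finset.range (k+1), μ (t+1) j
        = (∑ t ∈ Finset.range (k+1), μ t j) + μ (k+1) j - μ 0 j := by
      have h := Finset.sum_range_succ' (fun t => μ t j) (k+1)
      rw [Finset.sum_range_succ (fun t => μ t j) (k+1)] at h
      linarith [h]
    simp only [hν, hstepdef, Pi.add_apply, Pi.smul_apply, Finset.sum_apply, Pi.sub_apply,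
      smul_eq_mul]
    calc ∑ i, ((k+1 : ℝ)⁻¹ * ∑ t ∈ Finset.range (k+1), μ t i) * Q i j
        = (k+1 : ℝ)⁻¹ * ∑ i, (∑ t ∈ Finset.range (k+1), μ t i) * Q i j := by
          rw [Finset.mul_sum]; exact Finset.sum_congr rfl fun i _ => by ring
      _ = (k+1 : ℝ)⁻¹ * ∑ t ∈ Finset.range (k+1), ∑ i, μ t i * Q i j := by
          congr 1
          rw [Finset.sum_comm]
          exact Finset.sum_congr rfl fun i _ => Finset.sum_mul ..
      _ = (k+1 : ℝ)⁻¹ * ∑ t ∈ Finset.range (k+1), μ (t+1) j := by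
          congr 1
          exact Finset.sum_congr rfl fun t _ => by rw [hμsucc, hstepdef]
      _ = _ := by rw [key]; ring
  have hcont : Continuous step := by
    rw [hstepdef]
    exact continuous_pi fun j => continuous_finset_sum _ fun i _ =>
      (continuous_apply i).mul continuous_const
  have hnorm : ∀ t, ‖μ t‖ ≤ 1 := by
    intro t
    refine (pi_norm_le_iff_of_nonneg zero_le_one).2 fun i => ?_
    rw [Real.norm_eq_abs, abs_of_nonneg ((hμK t).1 i)]
    calc μ t i ≤ ∑ j, μ t j := Finset.single_le_sum (fun j _ => (hμK t).1 j) (Finset.mem_univ i)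
    _ = 1 := (hμK t).2.2
  have hE : Tendsto (fun k : ℕ => (k+1 : ℝ)⁻¹ • (μ (k+1) - μ 0)) atTop (𝓝 0) := by
    apply squeeze_zero_norm (a := fun k : ℕ => 2 * ((k:ℝ)+1)⁻¹)
    · intro k
      rw [norm_smul]
      have h2 : ‖μ (k+1) - μ 0‖ ≤ 2 := by
        calc ‖μ (k+1) - μ 0‖ ≤ ‖μ (k+1)‖ + ‖μ 0‖ := norm_sub_le _ _
        _ ≤ 2 := by linarith [hnorm (k+1), hnorm 0]
      have h3 : ‖((k:ℝ)+1)⁻¹‖ = ((k:ℝ)+1)⁻¹ := by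
        rw [Real.norm_eq_abs, abs_of_nonneg (by positivity)]
      rw [h3]
      calc ((k:ℝ)+1)⁻¹ * ‖μ (k+1) - μ 0‖ ≤ ((k:ℝ)+1)⁻¹ * 2 :=
        mul_le_mul_of_nonneg_left h2 (by positivity)
      _ = 2 * ((k:ℝ)+1)⁻¹ := by ring
    · have h2 : Tendsto (fun k : ℕ => 2 * (1 / ((k:ℝ) + 1))) atTop (𝓝 (2 * 0)) :=
        tendsto_one_div_add_atTop_nhds_zero_nat.const_mul 2
      simpa [one_div] using h2
  have hfix : step π = π := by
    have t1 : Tendsto (fun k => step (ν (ψ k))) atTop (𝓝 (step π)) :=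
      (hcont.tendsto π).comp hlim
    have t2 : Tendsto (fun k => step (ν (ψ k))) atTop (𝓝 π) := by
      have hEψ : Tendsto (fun k => (ψ k + 1 : ℝ)⁻¹ • (μ (ψ k + 1) - μ 0)) atTop (𝓝 0) :=
        hE.comp hψ.tendsto_atTop
      have h4 : Tendsto (fun k => ν (ψ k) + (ψ k + 1 : ℝ)⁻¹ • (μ (ψ k + 1) - μ 0))
          atTop (𝓝 (π + 0)) := hlim.add hEψ
      rw [add_zero] at h4
      refine h4.congr fun k => ?_
      rw [← hstepν]
    exact tendsto_nhds_unique t1 t2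
  refine ⟨π, hπK.2.1, hπK.2.2, fun j => ?_⟩
  have h5 : ∑ i, π i * M i j = ∑ i, π i * Q i j := by
    refine Finset.sum_congr rfl fun i _ => ?_
    by_cases hi : i ∈ F
    · simp only [hQ, if_pos hi]
    · rw [hπK.2.1 i hi, zero_mul, zero_mul]
  rw [h5]
  exact congrFun hfix j

/-- Invariant measure pairing: if `lam + u = ρ + Q u` on `F` and `π` is an invariant
probability vector supported on `F`, then `π ⬝ ρ = lam`. -/
lemma dot_lam {n : ℕ} (π ρ u : Fin n → ℝ) (Q : Fin n → Fin n → ℝ) (F : Finset (Fin n))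
    (lam : ℝ)
    (hsupp : ∀ i, i ∉ F → π i = 0) (hsum : ∑ i, π i = 1)
    (hinv : ∀ j, ∑ i, π i * Q i j = π j)
    (heq : ∀ i ∈ F, lam + u i = ρ i + ∑ j, Q i j * u j) :
    ∑ i, π i * ρ i = lam := by
  have h : ∑ i, π i * (lam + u i) = ∑ i, π i * (ρ i + ∑ j, Q i j * u j) := by
    refine Finset.sum_congr rfl fun i _ => ?_
    by_cases hF : i ∈ F
    · rw [heq i hF]
    · rw [hsupp i hF, zero_mul, zero_mul]
  have hL : ∑ i, π i * (lam + u i) = lam + ∑ i, π i * u i := by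
    simp only [mul_add]
    rw [Finset.sum_add_distrib, ← Finset.sum_mul, hsum, one_mul]
  have hR : ∑ i, π i * (ρ i + ∑ j, Q i j * u j)
      = (∑ i, π i * ρ i) + ∑ j, π j * u j := by
    simp only [mul_add]
    rw [Finset.sum_add_distrib]
    congr 1
    calc ∑ i, π i * ∑ j, Q i j * u j = ∑ i, ∑ j, π i * Q i j * u j := by
          refine Finset.sum_congr rfl fun i _ => ?_
          rw [Finset.mul_sum]
          exact Finset.sum_congr rfl fun j _ => by ring
    _ = ∑ j, ∑ i, π i * Q i j * u j := Finset.sum_comm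
    _ = ∑ j, (∑ i, π i * Q i j) * u j :=
          Finset.sum_congr rfl fun j _ => (Finset.sum_mul ..).symm
    _ = ∑ j, π j * u j := Finset.sum_congr rfl fun j _ => by rw [hinv j]
  rw [hL, hR] at h
  linarith


section Game
variable {n : ℕ} {A : Fin n → Type*} {B : ∀ i, A i → Type*}
    [∀ i, Fintype (A i)] [∀ i, Nonempty (A i)]
    [∀ i a, Fintype (B i a)] [∀ i a, Nonempty (B i a)]

/-- Basic exploitation of the eigenpair equations at a maximiser of `u - v`. -/
lemma shapley_key (r : ∀ i (a : A i), B i a → ℝ) (P : ∀ i (a : A i), B i a → Fin n → ℝ)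
    (hP0 : ∀ i a b j, 0 ≤ P i a b j) (hP1 : ∀ i a b, ∑ j, P i a b j = 1)
    (u v : Fin n → ℝ) (lam mu : ℝ)
    (hu : shapley r P u = lam • (1 : Fin n → ℝ) + u)
    (hv : shapley r P v = mu • (1 : Fin n → ℝ) + v)
    (i : Fin n) (hi : ∀ j, u j - v j ≤ u i - v i) :
    lam ≤ mu ∧ (mu ≤ lam → ∃ (a : A i) (b : B i a),
      lam + u i = r i a b + ∑ j, P i a b j * u j ∧
      mu + v i = r i a b + ∑ j, P i a b j * v j ∧
      ∀ j, P i a b j ≠ 0 → u j - v j = u i - v i) := by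
  have hui : (⨅ a : A i, ⨆ b : B i a, (r i a b + ∑ j, P i a b j * u j)) = lam + u i := by
    have := congrFun hu i
    simpa [shapley] using this
  have hvi : (⨅ a : A i, ⨆ b : B i a, (r i a b + ∑ j, P i a b j * v j)) = mu + v i := by
    have := congrFun hv i
    simpa [shapley] using this
  obtain ⟨a, hva, -⟩ :=
    exists_ciInf_eq' (fun a : A i => ⨆ b : B i a, (r i a b + ∑ j, P i a b j * v j))
  obtain ⟨b, hub, -⟩ :=
    exists_ciSup_eq' (fun b : B i a => r i a b + ∑ j, P i a b j * u j)
  have h1 : lam + u i ≤ r i a b + ∑ j, P i a b j * u j := by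
    rw [← hui, ← hub]
    have hb : BddBelow (Set.range
        (fun a : A i => ⨆ b : B i a, (r i a b + ∑ j, P i a b j * u j))) :=
      (Set.finite_range _).bddBelow
    exact ciInf_le hb a
  have h2 : r i a b + ∑ j, P i a b j * v j ≤ mu + v i := by
    rw [← hvi, hva]
    have hb2 : BddAbove (Set.range (fun b : B i a => r i a b + ∑ j, P i a b j * v j)) :=
      (Set.finite_range _).bddAbove
    exact le_ciSup hb2 b
  have hsw : (∑ j, P i a b j * u j) - (∑ j, P i a b j * v j)
      = ∑ j, P i a b j * (u j - v j) := by
    rw [← Finset.sum_sub_distrib]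
    exact Finset.sum_congr rfl fun j _ => by ring
  have h3 : ∑ j, P i a b j * (u j - v j) ≤ u i - v i := by
    calc ∑ j, P i a b j * (u j - v j) ≤ ∑ j, P i a b j * (u i - v i) :=
      Finset.sum_le_sum fun j _ => mul_le_mul_of_nonneg_left (hi j) (hP0 i a b j)
    _ = (∑ j, P i a b j) * (u i - v i) := (Finset.sum_mul ..).symm
    _ = u i - v i := by rw [hP1]; ring
  constructor
  · linarith
  · intro hml
    have heq3 : ∑ j, P i a b j * (u j - v j) = u i - v i := by linarith
    refine ⟨a, b, by linarith, by linarith, fun j hPj => ?_⟩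
    have hz : ∑ j, P i a b j * ((u i - v i) - (u j - v j)) = 0 := by
      have h4 : ∑ j, P i a b j * ((u i - v i) - (u j - v j))
          = (∑ j, P i a b j) * (u i - v i) - ∑ j, P i a b j * (u j - v j) := by
        rw [Finset.sum_mul, ← Finset.sum_sub_distrib]
        exact Finset.sum_congr rfl fun j _ => by ring
      rw [h4, hP1, heq3]; ring
    have hterm := (Finset.sum_eq_zero_iff_of_nonneg fun j _ =>
      mul_nonneg (hP0 i a b j) (by linarith [hi j])).1 hz j (Finset.mem_univ j)
    rcases mul_eq_zero.1 hterm with h | h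
    · exact absurd h hPj
    · linarith

variable (P : ∀ i (a : A i), B i a → Fin n → ℝ)

/-- The transition matrix induced by a pure stationary policy. -/
def polMat (σ : ∀ i, Σ a : A i, B i a) : Fin n → Fin n → ℝ :=
  fun i j => P i (σ i).1 (σ i).2 j

/-- Index data for the hyperplanes: two policies and two disjoint nonempty closed sets. -/
def IdxCond (p : (∀ i, Σ a : A i, B i a) × (∀ i, Σ a : A i, B i a) ×
    Finset (Fin n) × Finset (Fin n)) : Prop :=
  p.2.2.1.Nonempty ∧ p.2.2.2.Nonempty ∧ Disjoint p.2.2.1 p.2.2.2 ∧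
  (∀ i ∈ p.2.2.1, ∀ j, polMat P p.1 i j ≠ 0 → j ∈ p.2.2.1) ∧
  (∀ i ∈ p.2.2.2, ∀ j, polMat P p.2.1 i j ≠ 0 → j ∈ p.2.2.2)

variable (hP0 : ∀ i a b j, 0 ≤ P i a b j) (hP1 : ∀ i a b, ∑ j, P i a b j = 1)

/-- Chosen invariant measure for the first policy/set of an index. -/
noncomputable def meas1 (ι : Subtype (IdxCond P)) : Fin n → ℝ :=
  (exists_invariant (polMat P ι.1.1) ι.1.2.2.1 ι.2.1
    (fun i _ j => hP0 i _ _ j) (fun i _ => hP1 i _ _) ι.2.2.2.2.1).choose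

lemma meas1_spec (ι : Subtype (IdxCond P)) :
    (∀ i, i ∉ ι.1.2.2.1 → meas1 P hP0 hP1 ι i = 0) ∧ (∑ i, meas1 P hP0 hP1 ι i = 1) ∧
      (∀ j, ∑ i, meas1 P hP0 hP1 ι i * polMat P ι.1.1 i j = meas1 P hP0 hP1 ι j) :=
  (exists_invariant (polMat P ι.1.1) ι.1.2.2.1 ι.2.1
    (fun i _ j => hP0 i _ _ j) (fun i _ => hP1 i _ _) ι.2.2.2.2.1).choose_spec

/-- Chosen invariant measure for the second policy/set of an index. -/
noncomputable def meas2 (ι : Subtype (IdxCond P)) : Fin n → ℝ :=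
  (exists_invariant (polMat P ι.1.2.1) ι.1.2.2.2 ι.2.2.1
    (fun i _ j => hP0 i _ _ j) (fun i _ => hP1 i _ _) ι.2.2.2.2.2).choose

lemma meas2_spec (ι : Subtype (IdxCond P)) :
    (∀ i, i ∉ ι.1.2.2.2 → meas2 P hP0 hP1 ι i = 0) ∧ (∑ i, meas2 P hP0 hP1 ι i = 1) ∧
      (∀ j, ∑ i, meas2 P hP0 hP1 ι i * polMat P ι.1.2.1 i j = meas2 P hP0 hP1 ι j) :=
  (exists_invariant (polMat P ι.1.2.1) ι.1.2.2.2 ι.2.2.1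
    (fun i _ j => hP0 i _ _ j) (fun i _ => hP1 i _ _) ι.2.2.2.2.2).choose_spec

/-- The linear functional attached to an index: difference of the two expected payments. -/
noncomputable def funcOf (ι : Subtype (IdxCond P)) :
    (∀ i (a : A i), B i a → ℝ) →ₗ[ℝ] ℝ where
  toFun r := (∑ i, meas1 P hP0 hP1 ι i * r i (ι.1.1 i).1 (ι.1.1 i).2)
    - ∑ i, meas2 P hP0 hP1 ι i * r i (ι.1.2.1 i).1 (ι.1.2.1 i).2
  map_add' r s := by
    simp only [Pi.add_apply, mul_add, Finset.sum_add_distrib]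
    ring
  map_smul' c r := by
    simp only [Pi.smul_apply, smul_eq_mul, RingHom.id_apply, mul_sub, Finset.mul_sum]
    congr 1 <;> exact Finset.sum_congr rfl fun i _ => by ring

lemma funcOf_ne_zero (ι : Subtype (IdxCond P)) : funcOf P hP0 hP1 ι ≠ 0 := by
  classical
  intro h
  set r0 : ∀ i (a : A i), B i a → ℝ := fun i _ _ => if i ∈ ι.1.2.2.1 then (1:ℝ) else 0 with hr0
  have h1 : funcOf P hP0 hP1 ι r0 = 1 := by
    have hA : ∑ i, meas1 P hP0 hP1 ι i * r0 i (ι.1.1 i).1 (ι.1.1 i).2 = 1 := by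
      rw [Finset.sum_congr rfl (g := fun i => meas1 P hP0 hP1 ι i) fun i _ => ?_]
      · exact (meas1_spec P hP0 hP1 ι).2.1
      · by_cases hi : i ∈ ι.1.2.2.1
        · simp [hr0, hi]
        · simp [(meas1_spec P hP0 hP1 ι).1 i hi]
    have hB : ∑ i, meas2 P hP0 hP1 ι i * r0 i (ι.1.2.1 i).1 (ι.1.2.1 i).2 = 0 := by
      refine Finset.sum_eq_zero fun i _ => ?_
      by_cases hi : i ∈ ι.1.2.2.1
      · rw [(meas2_spec P hP0 hP1 ι).1 i (Finset.disjoint_left.1 ι.2.2.2.1 hi), zero_mul]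
      · simp [hr0, hi]
    show (∑ i, meas1 P hP0 hP1 ι i * r0 i (ι.1.1 i).1 (ι.1.1 i).2)
      - ∑ i, meas2 P hP0 hP1 ι i * r0 i (ι.1.2.1 i).1 (ι.1.2.1 i).2 = 1
    rw [hA, hB]; ring
  rw [h] at h1
  simp at h1

end Game


/-- generic uniqueness of the bias vector.  Fixing the state space,
action sets and transition probabilities, and assuming that `T_r` has an eigenpair for
every transition payment `r`, there are finitely many nonzero linear functionals
`φ_1, …, φ_m` on the space of transition payments such that whenever `φ_k r ≠ 0` for all
`k`, the eigenvector of `T_r` is unique up to an additive constant. -/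
theorem generic_uniqueness_of_bias
    {n : ℕ} {A : Fin n → Type*} {B : ∀ i, A i → Type*}
    [∀ i, Fintype (A i)] [∀ i, Nonempty (A i)]
    [∀ i a, Fintype (B i a)] [∀ i a, Nonempty (B i a)]
    (P : ∀ i (a : A i), B i a → Fin n → ℝ)
    (hP0 : ∀ i a b j, 0 ≤ P i a b j)
    (hP1 : ∀ i a b, ∑ j, P i a b j = 1)
    (hev : ∀ r : ∀ i (a : A i), B i a → ℝ, ∃ (u : Fin n → ℝ) (lam : ℝ),
        shapley r P u = lam • (1 : Fin n → ℝ) + u) :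
    ∃ (m : ℕ) (φ : Fin m → ((∀ i (a : A i), B i a → ℝ) →ₗ[ℝ] ℝ)),
      (∀ k, φ k ≠ 0) ∧
      ∀ r : ∀ i (a : A i), B i a → ℝ, (∀ k, φ k r ≠ 0) →
        ∀ (u v : Fin n → ℝ) (lam mu : ℝ),
          shapley r P u = lam • (1 : Fin n → ℝ) + u →
          shapley r P v = mu • (1 : Fin n → ℝ) + v →
          ∃ c : ℝ, u = v + c • (1 : Fin n → ℝ) := by
  classical
  haveI : Fintype (Subtype (IdxCond P)) := Subtype.fintype _
  refine ⟨Fintype.card (Subtype (IdxCond P)),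
    fun k => funcOf P hP0 hP1 ((Fintype.equivFin (Subtype (IdxCond P))).symm k),
    fun k => funcOf_ne_zero P hP0 hP1 _, ?_⟩
  intro r hr u v lam mu hu hv
  rcases Nat.eq_zero_or_pos n with hn | hn
  · exact ⟨0, funext fun i => absurd i.isLt (by omega)⟩
  haveI : Nonempty (Fin n) := Fin.pos_iff_nonempty.mp hn
  obtain ⟨i0, hi0⟩ := Finite.exists_max (fun j => u j - v j)
  obtain ⟨i1, hi1⟩ := Finite.exists_max (fun j => v j - u j)
  have hlm : lam = mu :=
    le_antisymm (shapley_key r P hP0 hP1 u v lam mu hu hv i0 hi0).1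
      (shapley_key r P hP0 hP1 v u mu lam hv hu i1 hi1).1
  by_cases hc : u i0 - v i0 = u i1 - v i1
  · refine ⟨u i0 - v i0, funext fun j => ?_⟩
    simp only [Pi.add_apply, Pi.smul_apply, Pi.one_apply, smul_eq_mul, mul_one]
    have h1 := hi0 j
    have h2 := hi1 j
    linarith
  -- the two argmax/argmin sets
  set F : Finset (Fin n) := Finset.univ.filter (fun i => u i - v i = u i0 - v i0) with hFdef
  set G : Finset (Fin n) := Finset.univ.filter (fun i => v i - u i = v i1 - u i1) with hGdef
  have hFmem : ∀ i, i ∈ F ↔ u i - v i = u i0 - v i0 := fun i => by simp [hFdef]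
  have hGmem : ∀ i, i ∈ G ↔ v i - u i = v i1 - u i1 := fun i => by simp [hGdef]
  have hFdata : ∀ i, i ∈ F → ∃ (a : A i) (b : B i a),
      lam + u i = r i a b + ∑ j, P i a b j * u j ∧
      mu + v i = r i a b + ∑ j, P i a b j * v j ∧
      ∀ j, P i a b j ≠ 0 → u j - v j = u i - v i := by
    intro i hiF
    have hi' : ∀ j, u j - v j ≤ u i - v i := fun j => by
      rw [(hFmem i).1 hiF]; exact hi0 j
    exact (shapley_key r P hP0 hP1 u v lam mu hu hv i hi').2 hlm.ge
  choose aF bF hF1 hF2 hF3 using hFdata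
  have hGdata : ∀ i, i ∈ G → ∃ (a : A i) (b : B i a),
      mu + v i = r i a b + ∑ j, P i a b j * v j ∧
      lam + u i = r i a b + ∑ j, P i a b j * u j ∧
      ∀ j, P i a b j ≠ 0 → v j - u j = v i - u i := by
    intro i hiG
    have hi' : ∀ j, v j - u j ≤ v i - u i := fun j => by
      rw [(hGmem i).1 hiG]; exact hi1 j
    exact (shapley_key r P hP0 hP1 v u mu lam hv hu i hi').2 hlm.le
  choose aG bG hG1 hG2 hG3 using hGdata
  haveI hneS : ∀ i : Fin n, Nonempty (Σ a : A i, B i a) := fun i =>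
    ⟨⟨Classical.arbitrary _, Classical.arbitrary _⟩⟩
  obtain ⟨σ1, hσ1F⟩ : ∃ σ1 : ∀ i, Σ a : A i, B i a,
      ∀ i (h : i ∈ F), σ1 i = ⟨aF i h, bF i h⟩ :=
    ⟨fun i => if h : i ∈ F then ⟨aF i h, bF i h⟩ else Classical.arbitrary _,
      fun i h => dif_pos h⟩
  obtain ⟨σ2, hσ2G⟩ : ∃ σ2 : ∀ i, Σ a : A i, B i a,
      ∀ i (h : i ∈ G), σ2 i = ⟨aG i h, bG i h⟩ :=
    ⟨fun i => if h : i ∈ G then ⟨aG i h, bG i h⟩ else Classical.arbitrary _,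
      fun i h => dif_pos h⟩
  have hcond : IdxCond P (σ1, σ2, F, G) := by
    refine ⟨⟨i0, (hFmem i0).2 rfl⟩, ⟨i1, (hGmem i1).2 rfl⟩, ?_, ?_, ?_⟩
    · rw [Finset.disjoint_left]
      intro x hxF hxG
      have h1 := (hFmem x).1 hxF
      have h2 := (hGmem x).1 hxG
      exact hc (by linarith)
    · intro i hiF j hPj
      simp only [polMat] at hPj
      rw [hσ1F i hiF] at hPj
      refine (hFmem j).2 ?_
      rw [← (hFmem i).1 hiF]
      exact hF3 i hiF j hPj
    · intro i hiG j hPj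
      simp only [polMat] at hPj
      rw [hσ2G i hiG] at hPj
      refine (hGmem j).2 ?_
      rw [← (hGmem i).1 hiG]
      exact hG3 i hiG j hPj
  set ι : Subtype (IdxCond P) := ⟨(σ1, σ2, F, G), hcond⟩ with hι
  have e1 : ∑ i, meas1 P hP0 hP1 ι i * r i (σ1 i).1 (σ1 i).2 = lam := by
    refine dot_lam (meas1 P hP0 hP1 ι) (fun i => r i (σ1 i).1 (σ1 i).2) u
      (polMat P σ1) F lam (meas1_spec P hP0 hP1 ι).1 (meas1_spec P hP0 hP1 ι).2.1
      (meas1_spec P hP0 hP1 ι).2.2 ?_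
    intro i hiF
    show lam + u i = r i (σ1 i).1 (σ1 i).2 + ∑ j, P i (σ1 i).1 (σ1 i).2 j * u j
    rw [hσ1F i hiF]
    exact hF1 i hiF
  have e2 : ∑ i, meas2 P hP0 hP1 ι i * r i (σ2 i).1 (σ2 i).2 = mu := by
    refine dot_lam (meas2 P hP0 hP1 ι) (fun i => r i (σ2 i).1 (σ2 i).2) v
      (polMat P σ2) G mu (meas2_spec P hP0 hP1 ι).1 (meas2_spec P hP0 hP1 ι).2.1
      (meas2_spec P hP0 hP1 ι).2.2 ?_
    intro i hiG
    show mu + v i = r i (σ2 i).1 (σ2 i).2 + ∑ j, P i (σ2 i).1 (σ2 i).2 j * v j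
    rw [hσ2G i hiG]
    exact hG1 i hiG
  have hval : funcOf P hP0 hP1 ι r = 0 := by
    show (∑ i, meas1 P hP0 hP1 ι i * r i (σ1 i).1 (σ1 i).2)
      - ∑ i, meas2 P hP0 hP1 ι i * r i (σ2 i).1 (σ2 i).2 = 0
    rw [e1, e2, hlm, sub_self]
  have hk := hr ((Fintype.equivFin (Subtype (IdxCond P))) ι)
  simp only [Equiv.symm_apply_apply] at hk
  exact absurd hval hk
end

section
/- Let T : ℝⁿ → ℝⁿ be monotone and additively homogeneous. Suppose that for every x ∈ ℝⁿ the limit T̂(x) := lim_{α → +∞} T(αx)/α exists, and that every fixed point of T̂ is proportional to the all-ones vector 𝟏. Then T has an eigenpair, i.e. there exist u ∈ ℝⁿ and λ ∈ ℝ with T(u) = λ𝟏 + u. -/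
open Filter
set_option linter.unusedSectionVars false
set_option maxHeartbeats 1000000

namespace GGaux

variable {n : ℕ} [Nonempty (Fin n)]

noncomputable def tmax (x : Fin n → ℝ) : ℝ := ⨆ i, x i
noncomputable def tmin (x : Fin n → ℝ) : ℝ := ⨅ i, x i

lemma le_tmax (x : Fin n → ℝ) (i : Fin n) : x i ≤ tmax x :=
  le_ciSup (Finite.bddAbove_range x) i

lemma tmax_le {x : Fin n → ℝ} {c : ℝ} (h : ∀ i, x i ≤ c) : tmax x ≤ c := ciSup_le h

lemma tmin_le (x : Fin n → ℝ) (i : Fin n) : tmin x ≤ x i :=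
  ciInf_le (Finite.bddBelow_range x) i

lemma le_tmin {x : Fin n → ℝ} {c : ℝ} (h : ∀ i, c ≤ x i) : c ≤ tmin x := le_ciInf h

lemma exists_tmax (x : Fin n → ℝ) : ∃ i, x i = tmax x := by
  obtain ⟨i, hi⟩ := Finite.exists_max x
  exact ⟨i, le_antisymm (le_tmax x i) (tmax_le hi)⟩

lemma exists_tmin (x : Fin n → ℝ) : ∃ i, x i = tmin x := by
  obtain ⟨i, hi⟩ := Finite.exists_min x
  exact ⟨i, le_antisymm (le_tmin hi) (tmin_le x i)⟩

lemma tmin_le_tmax (x : Fin n → ℝ) : tmin x ≤ tmax x :=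
  (tmin_le x (Classical.arbitrary _)).trans (le_tmax x _)

variable {T : (Fin n → ℝ) → (Fin n → ℝ)} (hmon : Monotone T)
  (hah : ∀ (x : Fin n → ℝ) (c : ℝ), T (x + c • (1 : Fin n → ℝ)) = T x + c • (1 : Fin n → ℝ))

include hmon hah

lemma topical_le {x y : Fin n → ℝ} {c : ℝ} (h : ∀ i, x i ≤ y i + c) (i : Fin n) :
    T x i ≤ T y i + c := by
  have hx : x ≤ y + c • (1 : Fin n → ℝ) := fun j => by
    simpa using h j
  have := hmon hx i
  rwa [hah, Pi.add_apply, Pi.smul_apply, Pi.one_apply, smul_eq_mul, mul_one] at this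

lemma slice_bounded (That : (Fin n → ℝ) → (Fin n → ℝ))
    (hlim : ∀ x : Fin n → ℝ,
      Tendsto (fun α : ℝ => α⁻¹ • T (α • x)) atTop (nhds (That x)))
    (htriv : ∀ x : Fin n → ℝ, That x = x → ∃ c : ℝ, x = c • (1 : Fin n → ℝ))
    (lam0 mu0 : ℝ) :
    ∃ R : ℝ, ∀ x : Fin n → ℝ, (∀ i, x i + lam0 ≤ T x i) → (∀ i, T x i ≤ x i + mu0) →
      tmax x - tmin x ≤ R := by
  by_contra hcon
  push_neg at hcon
  choose x h1 h2 h3 using fun k : ℕ => hcon (k : ℝ)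
  set r : ℕ → ℝ := fun k => tmax (x k) - tmin (x k) with hr
  have hrpos : ∀ k, 0 < r k := fun k => lt_of_le_of_lt (Nat.cast_nonneg k) (h3 k)
  set y : ℕ → Fin n → ℝ := fun k i => (x k i - tmin (x k)) / r k with hy
  have hy01 : ∀ k, y k ∈ Set.Icc (0 : Fin n → ℝ) 1 := by
    intro k
    constructor
    · intro i
      exact div_nonneg (sub_nonneg.mpr (tmin_le (x k) i)) (hrpos k).le
    · intro i
      rw [Pi.one_apply, hy, div_le_one (hrpos k)]
      have := le_tmax (x k) i
      simp only [hr]; linarith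
  obtain ⟨yy, hymem, φ, hφ, hz⟩ := isCompact_Icc.tendsto_subseq hy01
  set s : ℕ → ℝ := fun k => r (φ k) with hs
  have hspos : ∀ k, 0 < s k := fun k => hrpos (φ k)
  have hstop : Tendsto s atTop atTop := by
    refine tendsto_atTop_mono (fun k => ?_) tendsto_natCast_atTop_atTop
    calc (k : ℝ) ≤ (φ k : ℝ) := Nat.cast_le.mpr hφ.le_apply
    _ ≤ s k := (h3 (φ k)).le
  set z : ℕ → Fin n → ℝ := fun k => y (φ k) with hzdef
  have hznorm : Tendsto (fun k => ‖z k - yy‖) atTop (nhds 0) :=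
    tendsto_iff_norm_sub_tendsto_zero.mp hz
  have hxz : ∀ k i, x (φ k) i = s k * z k i + tmin (x (φ k)) := by
    intro k i
    have : s k ≠ 0 := (hspos k).ne'
    have e : s k * z k i = x (φ k) i - tmin (x (φ k)) := by
      show s k * ((x (φ k) i - tmin (x (φ k))) / s k) = _
      field_simp
    linarith
  -- lower estimate
  have hlow : ∀ k i, z k i + (s k)⁻¹ * lam0 - ‖z k - yy‖ ≤ (s k)⁻¹ * T (s k • yy) i := by
    intro k i
    have hcmp : ∀ j, x (φ k) j ≤ (s k • yy) j + (tmin (x (φ k)) + s k * ‖z k - yy‖) := by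
      intro j
      have h1' := norm_le_pi_norm (z k - yy) j
      rw [Pi.sub_apply, Real.norm_eq_abs, abs_le] at h1'
      have : z k j - yy j ≤ ‖z k - yy‖ := h1'.2
      have hs' := (hspos k).le
      have := hxz k j
      have hmul : s k * z k j ≤ s k * yy j + s k * ‖z k - yy‖ := by nlinarith
      simp only [Pi.smul_apply, smul_eq_mul]
      linarith
    have hT := topical_le hmon hah hcmp i
    have hx1 := h1 (φ k) i
    have hxi := hxz k i
    -- T (s k • yy) i ≥ s k * z k i + lam0 - s k * ‖z k - yy‖
    have hmain : s k * z k i + lam0 - s k * ‖z k - yy‖ ≤ T (s k • yy) i := by linarith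
    have := mul_le_mul_of_nonneg_left hmain (inv_nonneg.mpr (hspos k).le)
    have hsne : s k ≠ 0 := (hspos k).ne'
    calc z k i + (s k)⁻¹ * lam0 - ‖z k - yy‖
        = (s k)⁻¹ * (s k * z k i + lam0 - s k * ‖z k - yy‖) := by field_simp
      _ ≤ (s k)⁻¹ * T (s k • yy) i := this
  -- upper estimate
  have hupp : ∀ k i, (s k)⁻¹ * T (s k • yy) i ≤ z k i + (s k)⁻¹ * mu0 + ‖z k - yy‖ := by
    intro k i
    have hcmp : ∀ j, (s k • yy) j ≤ x (φ k) j + (s k * ‖z k - yy‖ - tmin (x (φ k))) := by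
      intro j
      have h1' := norm_le_pi_norm (z k - yy) j
      rw [Pi.sub_apply, Real.norm_eq_abs, abs_le] at h1'
      have : -(‖z k - yy‖) ≤ z k j - yy j := h1'.1
      have hs' := (hspos k).le
      have := hxz k j
      have hmul : s k * yy j ≤ s k * z k j + s k * ‖z k - yy‖ := by nlinarith
      simp only [Pi.smul_apply, smul_eq_mul]
      linarith
    have hT := topical_le hmon hah hcmp i
    have hx2 := h2 (φ k) i
    have hxi := hxz k i
    have hmain : T (s k • yy) i ≤ s k * z k i + mu0 + s k * ‖z k - yy‖ := by linarith
    have := mul_le_mul_of_nonneg_left hmain (inv_nonneg.mpr (hspos k).le)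
    have hsne : s k ≠ 0 := (hspos k).ne'
    calc (s k)⁻¹ * T (s k • yy) i ≤ (s k)⁻¹ * (s k * z k i + mu0 + s k * ‖z k - yy‖) := this
      _ = z k i + (s k)⁻¹ * mu0 + ‖z k - yy‖ := by field_simp
  have hsinv : Tendsto (fun k => (s k)⁻¹) atTop (nhds 0) := hstop.inv_tendsto_atTop
  have hfix : That yy = yy := by
    funext i
    have hA : Tendsto (fun k => (s k)⁻¹ * T (s k • yy) i) atTop (nhds (That yy i)) := by
      have := (tendsto_pi_nhds.mp ((hlim yy).comp hstop)) i
      simpa [Pi.smul_apply, smul_eq_mul] using this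
    have hzi : Tendsto (fun k => z k i) atTop (nhds (yy i)) := (tendsto_pi_nhds.mp hz) i
    apply le_antisymm
    · -- That yy i ≤ yy i via upper estimate
      have hB : Tendsto (fun k => z k i + (s k)⁻¹ * mu0 + ‖z k - yy‖) atTop
          (nhds (yy i + 0 * mu0 + 0)) := (hzi.add (hsinv.mul_const mu0)).add hznorm
      have := le_of_tendsto_of_tendsto' hA (by simpa using hB) (fun k => hupp k i)
      simpa using this
    · have hB : Tendsto (fun k => z k i + (s k)⁻¹ * lam0 - ‖z k - yy‖) atTop
          (nhds (yy i + 0 * lam0 - 0)) := (hzi.add (hsinv.mul_const lam0)).sub hznorm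
      have := le_of_tendsto_of_tendsto' (by simpa using hB : Tendsto _ atTop (nhds (yy i))) hA
        (fun k => hlow k i)
      exact this
  obtain ⟨c, hc⟩ := htriv yy hfix
  obtain ⟨k, hk⟩ := (hznorm.eventually (eventually_mem_set.mpr
    (Iio_mem_nhds (by norm_num : (0:ℝ) < 1/2)))).exists
  obtain ⟨i, hi⟩ := exists_tmax (x (φ k))
  obtain ⟨j, hj⟩ := exists_tmin (x (φ k))
  have hz1 : z k i = 1 := by
    simp only [hzdef, hy]
    rw [hi]
    exact div_self (hrpos (φ k)).ne'
  have hz0 : z k j = 0 := by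
    simp only [hzdef, hy]
    rw [hj]
    simp
  have hyi : yy i = c := by rw [hc]; simp
  have hyj : yy j = c := by rw [hc]; simp
  have hni := norm_le_pi_norm (z k - yy) i
  have hnj := norm_le_pi_norm (z k - yy) j
  rw [Pi.sub_apply, Real.norm_eq_abs, abs_le] at hni hnj
  rw [Set.mem_Iio] at hk
  rw [hz1, hyi] at hni
  rw [hz0, hyj] at hnj
  linarith [hni.1, hni.2, hnj.1, hnj.2]

end GGaux

namespace GGaux
variable {n : ℕ} [Nonempty (Fin n)]
variable {T : (Fin n → ℝ) → (Fin n → ℝ)} (hmon : Monotone T)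
  (hah : ∀ (x : Fin n → ℝ) (c : ℝ), T (x + c • (1 : Fin n → ℝ)) = T x + c • (1 : Fin n → ℝ))
include hmon hah

lemma topical_nonexp (x y : Fin n → ℝ) : ‖T x - T y‖ ≤ ‖x - y‖ := by
  have h0 : (0:ℝ) ≤ ‖x - y‖ := norm_nonneg _
  rw [pi_norm_le_iff_of_nonneg h0]
  intro i
  rw [Real.norm_eq_abs, abs_le]
  constructor
  · have := topical_le hmon hah (x := y) (y := x) (c := ‖x - y‖)
      (fun j => by
        have := norm_le_pi_norm (x - y) j
        rw [Pi.sub_apply, Real.norm_eq_abs, abs_le] at this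
        linarith [this.1]) i
    simp only [Pi.sub_apply]; linarith
  · have := topical_le hmon hah (x := x) (y := y) (c := ‖x - y‖)
      (fun j => by
        have := norm_le_pi_norm (x - y) j
        rw [Pi.sub_apply, Real.norm_eq_abs, abs_le] at this
        linarith [this.2]) i
    simp only [Pi.sub_apply]; linarith

lemma topical_cont : Continuous T := by
  have : LipschitzWith 1 T := by
    refine LipschitzWith.of_dist_le_mul fun x y => ?_
    rw [dist_eq_norm, dist_eq_norm, NNReal.coe_one, one_mul]
    exact topical_nonexp hmon hah x y
  exact this.continuous

omit hmon in
lemma iterate_ah (k : ℕ) (x : Fin n → ℝ) (c : ℝ) :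
    T^[k] (x + c • (1 : Fin n → ℝ)) = T^[k] x + c • (1 : Fin n → ℝ) := by
  induction k generalizing x with
  | zero => simp
  | succ k ih => rw [Function.iterate_succ_apply, hah, Function.iterate_succ_apply, ih]

end GGaux

open GGaux in
/-- Gaubert–Gunawardena: let `T : ℝⁿ → ℝⁿ` be monotone and additively
homogeneous.  If the recession function `T̂(x) = lim_{α → ∞} T(αx)/α` exists for every
`x` and has only trivial fixed points (proportional to the all-ones vector), then `T`
has an eigenpair. -/
theorem eigenpair_of_recession_trivial_fixedPoints
    {n : ℕ} (T : (Fin n → ℝ) → (Fin n → ℝ))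
    (hmon : Monotone T)
    (hah : ∀ (x : Fin n → ℝ) (c : ℝ), T (x + c • (1 : Fin n → ℝ)) = T x + c • (1 : Fin n → ℝ))
    (That : (Fin n → ℝ) → (Fin n → ℝ))
    (hlim : ∀ x : Fin n → ℝ,
      Tendsto (fun α : ℝ => α⁻¹ • T (α • x)) atTop (nhds (That x)))
    (htriv : ∀ x : Fin n → ℝ, That x = x → ∃ c : ℝ, x = c • (1 : Fin n → ℝ)) :
    ∃ (u : Fin n → ℝ) (lam : ℝ), T u = lam • (1 : Fin n → ℝ) + u := by
  rcases Nat.eq_zero_or_pos n with hn | hn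
  · subst hn
    exact ⟨0, 0, funext fun i => i.elim0⟩
  haveI : Nonempty (Fin n) := ⟨⟨0, hn⟩⟩
  set lam0 : ℝ := tmin (T 0) with hlam0
  set mu0 : ℝ := tmax (T 0) with hmu0
  obtain ⟨R, hR⟩ := slice_bounded hmon hah That hlim htriv lam0 mu0
  set x : ℕ → Fin n → ℝ := fun k => T^[k] 0 with hx
  -- slice membership of the orbit
  have hslice : ∀ k, (∀ i, x k i + lam0 ≤ T (x k) i) ∧ (∀ i, T (x k) i ≤ x k i + mu0) := by
    intro k
    induction k with
    | zero =>
      constructor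
      · intro i; simpa [hx] using tmin_le (T 0) i
      · intro i; simpa [hx] using le_tmax (T 0) i
    | succ k ih =>
      have hxs : x (k+1) = T (x k) := Function.iterate_succ_apply' T k 0
      constructor
      · intro i
        rw [hxs]
        have := topical_le hmon hah (x := x k) (y := T (x k)) (c := -lam0)
          (fun j => by linarith [ih.1 j]) i
        linarith
      · intro i
        rw [hxs]
        exact topical_le hmon hah (x := T (x k)) (y := x k) (c := mu0) ih.2 i
  have hRk : ∀ k, tmax (x k) - tmin (x k) ≤ R := fun k => hR (x k) (hslice k).1 (hslice k).2
  have htmin0 : tmin (x 0) = 0 := by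
    have h1 : tmin (x 0) ≤ 0 := by simpa [hx] using tmin_le (x 0) (Classical.arbitrary _)
    have h2 : (0:ℝ) ≤ tmin (x 0) := le_tmin fun i => by simp [hx]
    linarith
  have htmax0 : tmax (x 0) = 0 := by
    have h1 : tmax (x 0) ≤ 0 := tmax_le fun i => by simp [hx]
    have h2 : (0:ℝ) ≤ tmax (x 0) := by simpa [hx] using le_tmax (x 0) (Classical.arbitrary _)
    linarith
  -- sub/super additivity
  have hsub : ∀ l j, tmax (x (l + j)) ≤ tmax (x l) + tmax (x j) := by
    intro l j
    refine tmax_le fun i => ?_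
    have hxlj : x (l + j) = T^[l] (x j) := Function.iterate_add_apply T l j 0
    have hcmp : x j ≤ 0 + tmax (x j) • (1 : Fin n → ℝ) := fun i => by
      simpa using le_tmax (x j) i
    have := (hmon.iterate l) hcmp
    rw [iterate_ah hah] at this
    have hi := this i
    rw [hxlj]
    have := le_tmax (x l) i
    simp only [Pi.add_apply, Pi.smul_apply, Pi.one_apply, smul_eq_mul, mul_one] at hi
    simp only [hx] at hi this ⊢
    linarith
  have hsup : ∀ l j, tmin (x l) + tmin (x j) ≤ tmin (x (l + j)) := by
    intro l j
    refine le_tmin fun i => ?_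
    have hxlj : x (l + j) = T^[l] (x j) := Function.iterate_add_apply T l j 0
    have hcmp : 0 + tmin (x j) • (1 : Fin n → ℝ) ≤ x j := fun i => by
      simpa using tmin_le (x j) i
    have := (hmon.iterate l) hcmp
    rw [iterate_ah hah] at this
    have hi := this i
    rw [hxlj]
    have := tmin_le (x l) i
    simp only [Pi.add_apply, Pi.smul_apply, Pi.one_apply, smul_eq_mul, mul_one] at hi
    simp only [hx] at hi this ⊢
    linarith
  -- multiplicative bounds
  have hbmul : ∀ m k : ℕ, (m : ℝ) * tmin (x k) ≤ tmin (x (m * k)) := by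
    intro m k
    induction m with
    | zero => simp [htmin0]
    | succ m ih =>
      have : (m + 1) * k = m * k + k := by ring
      rw [this]
      have := hsup (m * k) k
      push_cast
      nlinarith [hsup (m*k) k]
  have htmul : ∀ m k : ℕ, tmax (x (m * k)) ≤ (m : ℝ) * tmax (x k) := by
    intro m k
    induction m with
    | zero => simp [htmax0]
    | succ m ih =>
      have : (m + 1) * k = m * k + k := by ring
      rw [this]
      push_cast
      nlinarith [hsub (m*k) k]
  have hkm : ∀ k m : ℕ, 1 ≤ k → 1 ≤ m → tmin (x k) / k ≤ tmax (x m) / m := by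
    intro k m hk hm
    have hkpos : (0:ℝ) < k := by exact_mod_cast hk
    have hmpos : (0:ℝ) < m := by exact_mod_cast hm
    rw [div_le_div_iff₀ hkpos hmpos]
    have h1 := hbmul m k
    have h2 := htmul k m
    have h3 : tmin (x (m * k)) ≤ tmax (x (m * k)) := tmin_le_tmax _
    have h4 : m * k = k * m := by ring
    rw [h4] at h1 h3
    nlinarith
  -- the eigenvalue
  set S : Set ℝ := {v : ℝ | ∃ k : ℕ, 1 ≤ k ∧ v = tmin (x k) / k} with hS
  have hSne : S.Nonempty := ⟨tmin (x 1) / ((1:ℕ):ℝ), 1, le_refl 1, rfl⟩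
  have hSbdd : BddAbove S := by
    refine ⟨tmax (x 1) / ((1:ℕ):ℝ), ?_⟩
    rintro v ⟨k, hk, rfl⟩
    exact hkm k 1 hk (le_refl 1)
  set lamstar : ℝ := sSup S with hlamstar
  have hbk : ∀ k : ℕ, tmin (x k) ≤ (k : ℝ) * lamstar := by
    intro k
    rcases Nat.eq_zero_or_pos k with h | h
    · subst h; simp [htmin0]
    · have h1 : tmin (x k) / k ≤ lamstar := le_csSup hSbdd ⟨k, h, rfl⟩
      have hkpos : (0:ℝ) < k := by exact_mod_cast h
      rw [div_le_iff₀ hkpos] at h1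
      linarith [h1]
  have htk : ∀ k : ℕ, (k : ℝ) * lamstar ≤ tmax (x k) := by
    intro k
    rcases Nat.eq_zero_or_pos k with h | h
    · subst h; simp [htmax0]
    · have h1 : lamstar ≤ tmax (x k) / k := by
        refine csSup_le hSne ?_
        rintro v ⟨j, hj, rfl⟩
        exact hkm j k hj h
      have hkpos : (0:ℝ) < k := by exact_mod_cast h
      rw [le_div_iff₀ hkpos] at h1
      linarith
  -- shifted orbit
  set v : ℕ → Fin n → ℝ := fun k i => x k i - k * lamstar with hv
  have hvlb : ∀ k i, -R ≤ v k i := by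
    intro k i
    have h1 : tmin (x k) ≤ x k i := tmin_le _ i
    have h2 := hRk k
    have h3 := htk k
    simp only [hv]
    linarith
  have hvub : ∀ k i, v k i ≤ R := by
    intro k i
    have h1 : x k i ≤ tmax (x k) := le_tmax _ i
    have h2 := hRk k
    have h3 := hbk k
    simp only [hv]
    linarith
  -- the shifted map
  set T' : (Fin n → ℝ) → (Fin n → ℝ) := fun w => T w - lamstar • (1 : Fin n → ℝ) with hT'
  have hT'mon : Monotone T' := fun a b h i => by
    simp only [hT', Pi.sub_apply]
    exact sub_le_sub_right (hmon h i) _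
  have hT'ah : ∀ (y : Fin n → ℝ) (c : ℝ),
      T' (y + c • (1 : Fin n → ℝ)) = T' y + c • (1 : Fin n → ℝ) := by
    intro y c
    simp only [hT', hah]
    abel
  have hT'cont : Continuous T' := (topical_cont hmon hah).sub continuous_const
  have hT'v : ∀ j, T' (v j) = v (j + 1) := by
    intro j
    have hveq : v j = x j + (-((j:ℝ) * lamstar)) • (1 : Fin n → ℝ) := by
      funext i
      simp [hv, sub_eq_add_neg]
    funext i
    rw [hveq]
    simp only [hT', hah, Pi.sub_apply, Pi.add_apply, Pi.smul_apply, Pi.one_apply,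
      smul_eq_mul, mul_one]
    have hxs : x (j+1) = T (x j) := Function.iterate_succ_apply' T j 0
    simp only [hv, hxs]
    push_cast
    ring
  have hT'0 : ∀ k, T'^[k] 0 = v k := by
    intro k
    induction k with
    | zero =>
      funext i
      simp [hv, hx]
    | succ k ih =>
      rw [Function.iterate_succ_apply', ih, hT'v]
  -- pointwise liminf of v
  have hbddbelow : ∀ (k : ℕ) (i : Fin n), BddBelow (Set.range fun m : ℕ => v (k + m) i) := by
    intro k i
    exact ⟨-R, by rintro _ ⟨m, rfl⟩; exact hvlb _ i⟩
  set g : ℕ → Fin n → ℝ := fun k i => ⨅ m : ℕ, v (k + m) i with hg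
  have hgub : ∀ k i, g k i ≤ R := by
    intro k i
    have := ciInf_le (hbddbelow k i) 0
    simpa using this.trans (hvub (k + 0) i)
  have hgmono : ∀ i, Monotone fun k => g k i := by
    intro i
    refine monotone_nat_of_le_succ fun k => ?_
    refine le_ciInf fun m => ?_
    have := ciInf_le (hbddbelow k i) (1 + m)
    simpa [show k + (1 + m) = k + 1 + m by ring] using this
  set l : Fin n → ℝ := fun i => ⨆ k, g k i with hl
  have hgtend : Tendsto g atTop (nhds l) := by
    rw [tendsto_pi_nhds]
    intro i
    exact tendsto_atTop_ciSup (hgmono i) ⟨R, by rintro _ ⟨k, rfl⟩; exact hgub k i⟩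
  have hgle : ∀ k, g k ≤ l := fun k i =>
    le_ciSup (⟨R, by rintro _ ⟨j, rfl⟩; exact hgub j i⟩ : BddAbove _) k
  have hT'gk : ∀ k, T' (g k) ≤ l := by
    intro k
    have h1 : ∀ m, T' (g k) ≤ v (k + 1 + m) := by
      intro m
      have hle : g k ≤ v (k + m) := fun i => ciInf_le (hbddbelow k i) m
      have := hT'mon hle
      rw [hT'v (k + m)] at this
      simpa [show k + m + 1 = k + 1 + m by ring] using this
    intro i
    have h2 : T' (g k) i ≤ g (k + 1) i := le_ciInf fun m => h1 m i
    exact h2.trans (hgle (k+1) i)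
  have hT'l : T' l ≤ l := by
    have htd : Tendsto (fun k => T' (g k)) atTop (nhds (T' l)) :=
      (hT'cont.tendsto l).comp hgtend
    intro i
    have := (tendsto_pi_nhds.mp htd) i
    exact le_of_tendsto this (Eventually.of_forall fun k => hT'gk k i)
  -- decreasing iteration from l
  set w : ℕ → Fin n → ℝ := fun k => T'^[k] l with hw
  have hwdec : ∀ k, w (k + 1) ≤ w k := by
    intro k
    have : T'^[k+1] l = T'^[k] (T' l) := Function.iterate_succ_apply T' k l
    rw [hw]
    simp only
    rw [this]
    exact (hT'mon.iterate k) hT'l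
  have hwlb : ∀ k i, tmin l - R ≤ w k i := by
    intro k i
    have hcmp : (0 : Fin n → ℝ) + tmin l • (1 : Fin n → ℝ) ≤ l := fun j => by
      simpa using tmin_le l j
    have := (hT'mon.iterate k) hcmp
    rw [iterate_ah hT'ah, hT'0] at this
    have hi := this i
    simp only [Pi.add_apply, Pi.smul_apply, Pi.one_apply, smul_eq_mul, mul_one] at hi
    have := hvlb k i
    simp only [hw]
    linarith
  set u : Fin n → ℝ := fun i => ⨅ k, w k i with hu
  have hwtend : Tendsto w atTop (nhds u) := by
    rw [tendsto_pi_nhds]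
    intro i
    refine tendsto_atTop_ciInf (antitone_nat_of_succ_le fun k => hwdec k i)
      ⟨tmin l - R, by rintro _ ⟨k, rfl⟩; exact hwlb k i⟩
  have hfix : T' u = u := by
    have h1 : Tendsto (fun k => T' (w k)) atTop (nhds (T' u)) :=
      (hT'cont.tendsto u).comp hwtend
    have h2 : (fun k => T' (w k)) = fun k => w (k + 1) := by
      funext k
      simp only [hw]
      exact (Function.iterate_succ_apply' T' k l).symm
    rw [h2] at h1
    have h3 : Tendsto (fun k => w (k + 1)) atTop (nhds u) :=
      (tendsto_add_atTop_iff_nat 1).mpr hwtend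
    exact tendsto_nhds_unique h1 h3
  refine ⟨u, lamstar, ?_⟩
  have : T u - lamstar • (1 : Fin n → ℝ) = u := hfix
  funext i
  have := congrFun this i
  simp only [Pi.sub_apply, Pi.add_apply, Pi.smul_apply, Pi.one_apply, smul_eq_mul, mul_one] at this ⊢
  linarith
end

section
/- Let F be a payment-free Shapley operator and let I ∈ 𝓕⁻ be such that Φ(I) = ∅, i.e. the only J ∈ 𝓕⁺ with I ∩ J = ∅ is J = ∅. Then F has no fixed point u ∈ ℝⁿ that is not proportional to 𝟏 and satisfies argmin u = I, where argmin u = { i ∈ S : u_i = min_j u_j }. -/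
/-- The indicator vector `𝟏_K` of a set of states `K`. -/
noncomputable def indic {n : ℕ} (K : Set (Fin n)) : Fin n → ℝ :=
  K.indicator fun _ => (1 : ℝ)

/-- The family `𝓕⁻ = { I ⊆ S : F(𝟏_{S∖I}) ≤ 𝟏_{S∖I} }`. -/
def Fminus {n : ℕ} (F : (Fin n → ℝ) → (Fin n → ℝ)) : Set (Set (Fin n)) :=
  {I | F (indic Iᶜ) ≤ indic Iᶜ}

/-- The family `𝓕⁺ = { J ⊆ S : 𝟏_J ≤ F(𝟏_J) }`. -/
def Fplus {n : ℕ} (F : (Fin n → ℝ) → (Fin n → ℝ)) : Set (Set (Fin n)) :=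
  {J | indic J ≤ F (indic J)}

/-- `Φ(I)`, the union of all `J ∈ 𝓕⁺` disjoint from `I`. -/
def Phi {n : ℕ} (F : (Fin n → ℝ) → (Fin n → ℝ)) (I : Set (Fin n)) : Set (Fin n) :=
  ⋃₀ {J | J ∈ Fplus F ∧ I ∩ J = ∅}

/-- `Φ*(J)`, the union of all `I ∈ 𝓕⁻` disjoint from `J`. -/
def PhiStar {n : ℕ} (F : (Fin n → ℝ) → (Fin n → ℝ)) (J : Set (Fin n)) : Set (Fin n) :=
  ⋃₀ {I | I ∈ Fminus F ∧ I ∩ J = ∅}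

/-- if `I ∈ 𝓕⁻` and `Φ(I) = ∅`, then the payment-free Shapley operator `F`
has no nontrivial fixed point `u` with `argmin u = I`. -/
theorem no_nontrivial_fixedPoint_with_argmin_of_Phi_empty
    {n : ℕ} {A : Fin n → Type*} {B : ∀ i, A i → Type*}
    [∀ i, Fintype (A i)] [∀ i, Nonempty (A i)]
    [∀ i a, Fintype (B i a)] [∀ i a, Nonempty (B i a)]
    (P : ∀ i (a : A i), B i a → Fin n → ℝ)
    (hP0 : ∀ i a b j, 0 ≤ P i a b j)
    (hP1 : ∀ i a b, ∑ j, P i a b j = 1)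
    (I : Set (Fin n))
    (hI : I ∈ Fminus (paymentFreeShapley P))
    (hPhi : Phi (paymentFreeShapley P) I = ∅) :
    ¬ ∃ u : Fin n → ℝ, paymentFreeShapley P u = u ∧
        (¬ ∃ c : ℝ, u = c • (1 : Fin n → ℝ)) ∧
        {i : Fin n | ∀ j, u i ≤ u j} = I := by
  rintro ⟨u, hfix, hnc, harg⟩
  have hne : Nonempty (Fin n) := by
    by_contra h
    exact hnc ⟨0, funext fun i => absurd ⟨i⟩ h⟩
  obtain ⟨i0, hi0⟩ := Finite.exists_max u
  set J : Set (Fin n) := {i | ∀ j, u j ≤ u i} with hJdef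
  have hi0J : i0 ∈ J := hi0
  -- I and J are disjoint
  have hdisj : I ∩ J = ∅ := by
    ext i
    simp only [Set.mem_inter_iff, Set.mem_empty_iff_false, iff_false, not_and]
    intro hiI hiJ
    rw [← harg] at hiI
    refine hnc ⟨u i, funext fun j => ?_⟩
    have : u j = u i := le_antisymm (hiJ j) (hiI j)
    simp [this]
  -- J ∈ Fplus
  have hJplus : J ∈ Fplus (paymentFreeShapley P) := by
    intro i
    by_cases hiJ : i ∈ J
    · -- indic J i = 1 ≤ F (indic J) i
      have h1 : indic J i = 1 := Set.indicator_of_mem hiJ _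
      rw [h1]
      unfold paymentFreeShapley
      refine le_ciInf fun a => ?_
      -- find the maximizing b0
      obtain ⟨b0, hb0⟩ := Finite.exists_max (fun b => ∑ j, P i a b j * u j)
      have hui : u i = paymentFreeShapley P u i := (congrFun hfix i).symm
      have h2 : u i ≤ ⨆ b : B i a, ∑ j, P i a b j * u j := by
        rw [hui]
        exact ciInf_le (Finite.bddBelow_range _) a
      have h3 : u i ≤ ∑ j, P i a b0 j * u j := h2.trans (ciSup_le hb0)
      have h4 : ∑ j, P i a b0 j * u j ≤ u i := by
        calc ∑ j, P i a b0 j * u j ≤ ∑ j, P i a b0 j * u i :=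
              Finset.sum_le_sum fun j _ =>
                mul_le_mul_of_nonneg_left (hiJ j) (hP0 i a b0 j)
          _ = u i := by rw [← Finset.sum_mul, hP1, one_mul]
      have heq : ∑ j, P i a b0 j * u j = u i := le_antisymm h4 h3
      have hsum0 : ∑ j, P i a b0 j * (u i - u j) = 0 := by
        have : ∑ j, P i a b0 j * (u i - u j)
            = (∑ j, P i a b0 j * u i) - ∑ j, P i a b0 j * u j := by
          rw [← Finset.sum_sub_distrib]
          exact Finset.sum_congr rfl fun j _ => by ring
        rw [this, heq, ← Finset.sum_mul, hP1, one_mul, sub_self]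
      have hz : ∀ j ∈ Finset.univ, P i a b0 j * (u i - u j) = 0 :=
        (Finset.sum_eq_zero_iff_of_nonneg fun j _ =>
          mul_nonneg (hP0 i a b0 j) (sub_nonneg.2 (hiJ j))).1 hsum0
      have hkey : ∑ j, P i a b0 j * indic J j = 1 := by
        have : ∀ j ∈ Finset.univ, P i a b0 j * indic J j = P i a b0 j := by
          intro j _
          rcases eq_or_ne (P i a b0 j) 0 with h | h
          · simp [h]
          · have huj : u j = u i := by
              have := hz j (Finset.mem_univ j)
              rcases mul_eq_zero.1 this with h' | h'
              · exact absurd h' h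
              · linarith
            have hjJ : j ∈ J := fun k => huj ▸ hiJ k
            rw [indic, Set.indicator_of_mem hjJ, mul_one]
        rw [Finset.sum_congr rfl this, hP1]
      calc (1 : ℝ) = ∑ j, P i a b0 j * indic J j := hkey.symm
        _ ≤ ⨆ b : B i a, ∑ j, P i a b j * indic J j :=
            le_ciSup (f := fun b => ∑ j, P i a b j * indic J j) (Finite.bddAbove_range _) b0
    · have h0 : indic J i = 0 := Set.indicator_of_notMem hiJ _
      rw [h0]
      unfold paymentFreeShapley
      refine le_ciInf fun a => ?_
      have hnn : ∀ b : B i a, (0 : ℝ) ≤ ∑ j, P i a b j * indic J j := fun b =>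
        Finset.sum_nonneg fun j _ =>
          mul_nonneg (hP0 i a b j) (Set.indicator_nonneg (fun _ _ => zero_le_one) j)
      obtain ⟨b⟩ := ‹∀ i a, Nonempty (B i a)› i a
      exact le_ciSup_of_le (Finite.bddAbove_range _) b (hnn b)
  have : i0 ∈ Phi (paymentFreeShapley P) I := ⟨J, ⟨hJplus, hdisj⟩, hi0J⟩
  rw [hPhi] at this
  exact this
end

section
/- Let F be a payment-free Shapley operator and let I ∈ 𝓕⁻ with I ≠ ∅ and I = Φ*(Φ(I)). Then F has a fixed point u ∈ ℝⁿ satisfying argmin u = I, where argmin u = { i ∈ S : u_i = min_j u_j }. -/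
/-! ### Auxiliary lemmas -/

lemma my_ciInf_affine {ι : Type*} [Finite ι] [Nonempty ι] (f : ι → ℝ) (a c : ℝ) (ha : 0 ≤ a) :
    (⨅ i, (a * f i + c)) = a * (⨅ i, f i) + c := by
  obtain ⟨i0, h0⟩ := Finite.exists_min f
  have h1 : (⨅ i, f i) = f i0 :=
    le_antisymm (ciInf_le (Set.finite_range f).bddBelow i0) (le_ciInf h0)
  have h2 : (⨅ i, (a * f i + c)) = a * f i0 + c :=
    le_antisymm (ciInf_le (Set.finite_range _).bddBelow i0)
      (le_ciInf fun j => by nlinarith [h0 j])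
  rw [h1, h2]

lemma my_ciSup_affine {ι : Type*} [Finite ι] [Nonempty ι] (f : ι → ℝ) (a c : ℝ) (ha : 0 ≤ a) :
    (⨆ i, (a * f i + c)) = a * (⨆ i, f i) + c := by
  obtain ⟨i0, h0⟩ := Finite.exists_max f
  have h1 : (⨆ i, f i) = f i0 :=
    le_antisymm (ciSup_le h0) (le_ciSup (f := f) (Set.finite_range f).bddAbove i0)
  have h2 : (⨆ i, (a * f i + c)) = a * f i0 + c :=
    le_antisymm (ciSup_le fun j => by nlinarith [h0 j])
      (le_ciSup (f := fun i => a * f i + c) (Set.finite_range _).bddAbove i0)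
  rw [h1, h2]

section Shapley

variable {n : ℕ} {A : Fin n → Type*} {B : ∀ i, A i → Type*}
    [∀ i, Fintype (A i)] [∀ i, Nonempty (A i)]
    [∀ i a, Fintype (B i a)] [∀ i a, Nonempty (B i a)]
    (P : ∀ i (a : A i), B i a → Fin n → ℝ)

lemma shapley_mono (hP0 : ∀ i a b j, 0 ≤ P i a b j) {x y : Fin n → ℝ} (h : x ≤ y) :
    paymentFreeShapley P x ≤ paymentFreeShapley P y := by
  intro i
  unfold paymentFreeShapley
  apply ciInf_mono (Set.finite_range _).bddBelow
  intro a
  apply ciSup_mono (Set.finite_range _).bddAbove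
  intro b
  exact Finset.sum_le_sum fun j _ => mul_le_mul_of_nonneg_left (h j) (hP0 i a b j)

lemma shapley_affine (hP1 : ∀ i a b, ∑ j, P i a b j = 1) (a c : ℝ) (ha : 0 ≤ a)
    (x : Fin n → ℝ) :
    paymentFreeShapley P (fun j => a * x j + c) =
      fun i => a * paymentFreeShapley P x i + c := by
  funext i
  unfold paymentFreeShapley
  have hsum : ∀ (a' : A i) (b : B i a'),
      (∑ j, P i a' b j * (a * x j + c)) = a * (∑ j, P i a' b j * x j) + c := by
    intro a' b
    calc (∑ j, P i a' b j * (a * x j + c))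
        = ∑ j, (a * (P i a' b j * x j) + c * P i a' b j) := by
          apply Finset.sum_congr rfl; intros; ring
      _ = a * (∑ j, P i a' b j * x j) + c * (∑ j, P i a' b j) := by
          rw [Finset.sum_add_distrib, Finset.mul_sum, Finset.mul_sum]
      _ = a * (∑ j, P i a' b j * x j) + c := by rw [hP1]; ring
  simp only [hsum]
  have h1 : ∀ a' : A i,
      (⨆ b, (a * (∑ j, P i a' b j * x j) + c)) = a * (⨆ b, ∑ j, P i a' b j * x j) + c :=
    fun a' => my_ciSup_affine _ a c ha
  simp only [h1]
  exact my_ciInf_affine _ a c ha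

end Shapley

/-- if `I ∈ 𝓕⁻` is nonempty and closed for the Galois connection,
i.e. `I = Φ*(Φ(I))`, then the payment-free Shapley operator `F` has a fixed point `u`
with `argmin u = I`. -/
theorem exists_fixedPoint_with_argmin_of_closed
    {n : ℕ} {A : Fin n → Type*} {B : ∀ i, A i → Type*}
    [∀ i, Fintype (A i)] [∀ i, Nonempty (A i)]
    [∀ i a, Fintype (B i a)] [∀ i a, Nonempty (B i a)]
    (P : ∀ i (a : A i), B i a → Fin n → ℝ)
    (hP0 : ∀ i a b j, 0 ≤ P i a b j)
    (hP1 : ∀ i a b, ∑ j, P i a b j = 1)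
    (I : Set (Fin n))
    (hI : I ∈ Fminus (paymentFreeShapley P))
    (hIne : I ≠ ∅)
    (hclosed : I = PhiStar (paymentFreeShapley P) (Phi (paymentFreeShapley P) I)) :
    ∃ u : Fin n → ℝ, paymentFreeShapley P u = u ∧
      {i : Fin n | ∀ j, u i ≤ u j} = I := by
  classical
  set F := paymentFreeShapley P with hFdef
  have hmono : ∀ {x y : Fin n → ℝ}, x ≤ y → F x ≤ F y := fun h => shapley_mono P hP0 h
  have haff : ∀ (a c : ℝ), 0 ≤ a → ∀ x : Fin n → ℝ,
      F (fun j => a * x j + c) = fun i => a * F x i + c :=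
    fun a c ha x => shapley_affine P hP1 a c ha x
  have hconst : ∀ c : ℝ, F (fun _ => c) = fun _ => c := by
    intro c
    have h := haff 0 c le_rfl (fun _ => 0)
    simpa using h
  -- F(-𝟏_I) ≤ -𝟏_I
  have hImem : F (indic Iᶜ) ≤ indic Iᶜ := hI
  have hIstep : F (fun j => -(indic I j)) ≤ fun j => -(indic I j) := by
    have hcompl : indic Iᶜ = fun j => 1 * (fun j => -(indic I j)) j + 1 := by
      funext j
      by_cases hj : j ∈ I <;>
        simp [indic, Set.indicator, hj]
    rw [hcompl, haff 1 1 zero_le_one] at hImem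
    intro j
    have h2 := hImem j
    dsimp only at h2 ⊢
    linarith
  set x0 : Fin n → ℝ := fun j => -(indic I j) with hx0
  set xs : ℕ → Fin n → ℝ := fun k => F^[k] x0 with hxs
  have hxzero : xs 0 = x0 := rfl
  have hxsucc : ∀ k, xs (k + 1) = F (xs k) := fun k => Function.iterate_succ_apply' F k x0
  have hdec : ∀ k, xs (k + 1) ≤ xs k := by
    intro k
    induction k with
    | zero => rw [hxsucc, hxzero]; exact hIstep
    | succ k ih =>
      calc xs (k + 1 + 1) = F (xs (k + 1)) := hxsucc (k + 1)
        _ ≤ F (xs k) := hmono ih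
        _ = xs (k + 1) := (hxsucc k).symm
  have hanti : Antitone xs := antitone_nat_of_succ_le hdec
  have hlb : ∀ k, (fun _ : Fin n => (-1 : ℝ)) ≤ xs k := by
    intro k
    induction k with
    | zero =>
      rw [hxzero]
      intro j
      by_cases hj : j ∈ I <;> simp [hx0, indic, Set.indicator, hj]
    | succ k ih =>
      rw [hxsucc]
      calc (fun _ : Fin n => (-1 : ℝ)) = F (fun _ => -1) := (hconst _).symm
        _ ≤ F (xs k) := hmono ih
  have hbdd : ∀ i, BddBelow (Set.range fun k => xs k i) := by
    intro i
    refine ⟨-1, ?_⟩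
    rintro y ⟨k, rfl⟩
    exact hlb k i
  set u : Fin n → ℝ := fun i => ⨅ k, xs k i with hu
  have hule : ∀ k, u ≤ xs k := fun k i => ciInf_le (hbdd i) k
  have hulb : ∀ i, -1 ≤ u i := fun i => le_ciInf fun k => hlb k i
  have hFule : F u ≤ u := by
    intro i
    refine le_ciInf fun k => ?_
    calc F u i ≤ F (xs k) i := hmono (hule k) i
      _ = xs (k + 1) i := (congrFun (hxsucc k) i).symm
      _ ≤ xs k i := hdec k i
  have huleF : u ≤ F u := by
    intro i
    refine le_of_forall_pos_le_add fun ε hε => ?_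
    have hex : ∀ j, ∃ k, xs k j < u j + ε := by
      intro j
      refine exists_lt_of_ciInf_lt ?_
      show u j < u j + ε
      linarith
    choose kf hkf using hex
    set K := Finset.univ.sup kf with hK
    have hxK : ∀ j, xs K j < u j + ε := fun j =>
      lt_of_le_of_lt (hanti (Finset.le_sup (Finset.mem_univ j)) j) (hkf j)
    have h3 : F (fun j => u j + ε) = fun i => F u i + ε := by
      have h := haff 1 ε zero_le_one u
      simpa using h
    calc u i ≤ xs (K + 1) i := hule (K + 1) i
      _ = F (xs K) i := congrFun (hxsucc K) i
      _ ≤ F (fun j => u j + ε) i := hmono (fun j => (hxK j).le) i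
      _ = F u i + ε := congrFun h3 i
  have hfix : F u = u := le_antisymm hFule huleF
  have huI : ∀ i ∈ I, u i = -1 := by
    intro i hi
    have h1 : u i ≤ xs 0 i := hule 0 i
    have h2 : xs 0 i = -1 := by
      rw [hxzero]; simp [hx0, indic, Set.indicator_of_mem hi]
    exact le_antisymm (h1.trans_eq h2) (hulb i)
  set J := Phi F I with hJ
  have hIJ : ∀ i ∈ I, i ∉ J := by
    intro i hi hiJ
    obtain ⟨J', ⟨hJ'p, hJ'I⟩, hiJ'⟩ := hiJ
    exact absurd (Set.mem_inter hi hiJ') (by rw [hJ'I]; exact Set.notMem_empty i)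
  have hJplus : indic J ≤ F (indic J) := by
    intro i
    by_cases hi : i ∈ J
    · have hi2 := hi
      obtain ⟨J', ⟨hJ'p, hJ'I⟩, hiJ'⟩ := hi2
      have h1 : indic J' ≤ indic J := by
        intro j
        by_cases hj : j ∈ J'
        · have hjJ : j ∈ J := ⟨J', ⟨hJ'p, hJ'I⟩, hj⟩
          simp [indic, Set.indicator_of_mem, hj, hjJ]
        · simp only [indic, Set.indicator_of_notMem hj]
          exact Set.indicator_nonneg (fun _ _ => zero_le_one) j
      have h2 : F (indic J') ≤ F (indic J) := hmono h1
      have h3 : (1 : ℝ) ≤ F (indic J') i := by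
        have h := hJ'p i
        rwa [indic, Set.indicator_of_mem hiJ'] at h
      have h4 : indic J i = 1 := by rw [indic, Set.indicator_of_mem hi]
      rw [h4]
      exact h3.trans (h2 i)
    · have h0 : indic J i = 0 := Set.indicator_of_notMem hi _
      rw [h0]
      have h1 : F (fun _ => (0 : ℝ)) ≤ F (indic J) :=
        hmono (fun j => Set.indicator_nonneg (fun _ _ => zero_le_one) j)
      calc (0 : ℝ) = F (fun _ => 0) i := by rw [hconst]
        _ ≤ F (indic J) i := h1 i
  have hJlb : ∀ k, (fun j => indic J j - 1) ≤ xs k := by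
    intro k
    induction k with
    | zero =>
      rw [hxzero]
      intro j
      by_cases hj : j ∈ I
      · have hjJ : j ∉ J := hIJ j hj
        simp [hx0, indic, Set.indicator, hj, hjJ]
      · by_cases hj2 : j ∈ J <;> simp [hx0, indic, Set.indicator, hj, hj2]
    | succ k ih =>
      rw [hxsucc]
      have h2 : F (fun j => indic J j - 1) = fun i => F (indic J) i - 1 := by
        have h := haff 1 (-1) zero_le_one (indic J)
        simp only [one_mul] at h
        calc F (fun j => indic J j - 1) = F (fun j => indic J j + (-1)) := by
              simp [sub_eq_add_neg]
          _ = fun i => F (indic J) i + (-1) := h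
          _ = fun i => F (indic J) i - 1 := by funext i; ring
      intro i
      have h1 := hmono ih i
      rw [h2] at h1
      dsimp only at h1 ⊢
      have h3 := hJplus i
      linarith
  have huJ : ∀ i ∈ J, 0 ≤ u i := by
    intro i hi
    have h1 : indic J i - 1 ≤ u i := le_ciInf fun k => hJlb k i
    rw [indic, Set.indicator_of_mem hi] at h1
    linarith
  set K : Set (Fin n) := {i | u i = -1} with hKdef
  have hIK : I ⊆ K := fun i hi => huI i hi
  have hKJ : K ∩ J = ∅ := by
    ext i
    simp only [Set.mem_inter_iff, Set.mem_empty_iff_false, iff_false, not_and]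
    intro h1 h2
    have h3 : u i = -1 := h1
    have h4 := huJ i h2
    linarith
  have hKm : K ∈ Fminus F := by
    show F (indic Kᶜ) ≤ indic Kᶜ
    by_cases hall : ∀ i, u i = -1
    · have hKc : Kᶜ = (∅ : Set (Fin n)) := by
        ext i
        simp [hKdef, hall i]
      have hempty : indic (∅ : Set (Fin n)) = fun _ => (0 : ℝ) := by
        funext j; simp [indic]
      rw [hKc, hempty, hconst 0]
    · push_neg at hall
      have hne : Nonempty {i // u i ≠ -1} := ⟨⟨hall.choose, hall.choose_spec⟩⟩
      obtain ⟨⟨i1, hi1⟩, hmin⟩ := Finite.exists_min (fun p : {i // u i ≠ -1} => u p.1)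
      set ε := u i1 + 1 with hε
      have hεpos : 0 < ε := by
        rcases lt_or_eq_of_le (hulb i1) with h | h
        · rw [hε]; linarith
        · exact absurd h.symm hi1
      have hεle : ∀ j, j ∉ K → ε ≤ u j + 1 := by
        intro j hj
        have hjne : u j ≠ -1 := hj
        have := hmin ⟨j, hjne⟩
        rw [hε]
        dsimp only at this
        linarith
      set v : Fin n → ℝ := fun j => (1 / ε) * u j + 1 / ε with hv
      have hFv : F v = v := by
        rw [hv, haff (1 / ε) (1 / ε) (by positivity) u]
        funext i
        rw [congrFun hfix i]
      have hle1 : indic Kᶜ ≤ v := by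
        intro j
        by_cases hj : j ∈ K
        · have h0 : indic Kᶜ j = 0 := Set.indicator_of_notMem (by simpa using hj) _
          have h1 : u j = -1 := hj
          rw [h0, hv]
          dsimp only
          rw [h1]
          ring_nf
          exact le_refl 0
        · have h1 : indic Kᶜ j = 1 := Set.indicator_of_mem (by simpa using hj) _
          have h2 := hεle j hj
          rw [h1, hv]
          dsimp only
          have h3 : (1 / ε) * u j + 1 / ε = (u j + 1) / ε := by ring
          rw [h3, le_div_iff₀ hεpos]
          linarith
      have hle2 : F (indic Kᶜ) ≤ fun _ => (1 : ℝ) := by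
        have h1 : indic Kᶜ ≤ fun _ => (1 : ℝ) := by
          intro j
          exact Set.indicator_le_self' (fun _ _ => zero_le_one) j
        calc F (indic Kᶜ) ≤ F (fun _ => 1) := hmono h1
          _ = fun _ => 1 := hconst 1
      intro i
      by_cases hi : i ∈ K
      · have h3 := (hmono hle1).trans_eq hFv i
        have h4 : v i = 0 := by
          rw [hv]
          dsimp only
          rw [show u i = -1 from hi]
          ring
        have h5 : indic Kᶜ i = 0 := Set.indicator_of_notMem (by simpa using hi) _
        rw [h5]
        rw [h4] at h3
        exact h3
      · have h5 : indic Kᶜ i = 1 := Set.indicator_of_mem (by simpa using hi) _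
        rw [h5]
        exact hle2 i
  have hKsub : K ⊆ I := by
    rw [hclosed]
    intro i hi
    exact Set.mem_sUnion.2 ⟨K, ⟨hKm, hKJ⟩, hi⟩
  have hKI : K = I := le_antisymm hKsub hIK
  refine ⟨u, hfix, ?_⟩
  rw [← hKI]
  ext i
  simp only [Set.mem_setOf_eq, hKdef]
  constructor
  · intro h
    obtain ⟨i0, hi0⟩ := Set.nonempty_iff_ne_empty.2 hIne
    have h1 := h i0
    have h2 := huI i0 hi0
    have h3 := hulb i
    show u i = -1
    linarith [h1, h2.symm ▸ h1]
  · intro h j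
    have h1 : u i = -1 := h
    rw [h1]
    exact hulb j
end

section
/- Let F be a payment-free Shapley operator with upper and lower Boolean abstractions F⁺ and F⁻. Then for all subsets I, J ⊆ S: I ∈ 𝓕⁻ if and only if F⁺(𝟏_{S∖I}) ≤ 𝟏_{S∖I}, and J ∈ 𝓕⁺ if and only if F⁻(𝟏_J) ≥ 𝟏_J. -/
set_option linter.unusedSectionVars false
set_option linter.unusedVariables false


/-- Upper Boolean abstraction: `[F⁺(x)]_i = min_a max_b max_{j : P_{ij}^{ab} > 0} x_j`. -/
noncomputable def shapleyUpper {n : ℕ} {A : Fin n → Type*} {B : ∀ i, A i → Type*}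
    [∀ i, Fintype (A i)] [∀ i, Nonempty (A i)]
    [∀ i a, Fintype (B i a)] [∀ i a, Nonempty (B i a)]
    (P : ∀ i (a : A i), B i a → Fin n → ℝ) :
    (Fin n → ℝ) → (Fin n → ℝ) :=
  fun x i => ⨅ a : A i, ⨆ b : B i a, ⨆ j : {j : Fin n // 0 < P i a b j}, x j

/-- Lower Boolean abstraction: `[F⁻(x)]_i = min_a max_b min_{j : P_{ij}^{ab} > 0} x_j`. -/
noncomputable def shapleyLower {n : ℕ} {A : Fin n → Type*} {B : ∀ i, A i → Type*}
    [∀ i, Fintype (A i)] [∀ i, Nonempty (A i)]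
    [∀ i a, Fintype (B i a)] [∀ i a, Nonempty (B i a)]
    (P : ∀ i (a : A i), B i a → Fin n → ℝ) :
    (Fin n → ℝ) → (Fin n → ℝ) :=
  fun x i => ⨅ a : A i, ⨆ b : B i a, ⨅ j : {j : Fin n // 0 < P i a b j}, x j



lemma finInf_le_iff' {ι : Type*} [Finite ι] [Nonempty ι] (f : ι → ℝ) (c : ℝ) :
    (⨅ i, f i) ≤ c ↔ ∃ i, f i ≤ c := by
  constructor
  · intro h
    obtain ⟨i, hi⟩ := exists_eq_ciInf_of_finite (f := f)
    exact ⟨i, hi ▸ h⟩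
  · rintro ⟨i, hi⟩
    exact (ciInf_le (Finite.bddBelow_range f) i).trans hi

lemma le_finSup_iff' {ι : Type*} [Finite ι] [Nonempty ι] (f : ι → ℝ) (c : ℝ) :
    c ≤ (⨆ i, f i) ↔ ∃ i, c ≤ f i := by
  constructor
  · intro h
    obtain ⟨i, hi⟩ := exists_eq_ciSup_of_finite (f := f)
    exact ⟨i, hi ▸ h⟩
  · rintro ⟨i, hi⟩
    exact hi.trans (le_ciSup (Finite.bddAbove_range f) i)

lemma finSup_le_iff' {ι : Type*} [Finite ι] [Nonempty ι] (f : ι → ℝ) (c : ℝ) :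
    (⨆ i, f i) ≤ c ↔ ∀ i, f i ≤ c :=
  ciSup_le_iff (Finite.bddAbove_range f)

lemma le_finInf_iff' {ι : Type*} [Finite ι] [Nonempty ι] (f : ι → ℝ) (c : ℝ) :
    c ≤ (⨅ i, f i) ↔ ∀ i, c ≤ f i :=
  le_ciInf_iff (Finite.bddBelow_range f)

lemma sum_le_zero_iff' {n : ℕ} (P x : Fin n → ℝ) (hP0 : ∀ j, 0 ≤ P j)
    (hx0 : ∀ j, 0 ≤ x j) :
    (∑ j, P j * x j) ≤ 0 ↔ ∀ j, 0 < P j → x j ≤ 0 := by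
  constructor
  · intro h j hj
    have hterm : ∀ k ∈ Finset.univ, (0:ℝ) ≤ P k * x k :=
      fun k _ => mul_nonneg (hP0 k) (hx0 k)
    have h0 := (Finset.sum_eq_zero_iff_of_nonneg hterm).mp
      (le_antisymm h (Finset.sum_nonneg hterm)) j (Finset.mem_univ j)
    nlinarith [hx0 j]
  · intro h
    apply Finset.sum_nonpos
    intro j _
    rcases (hP0 j).lt_or_eq with hp | hp
    · exact mul_nonpos_of_nonneg_of_nonpos (hP0 j) (h j hp)
    · simp [← hp]

lemma one_le_sum_iff' {n : ℕ} (P x : Fin n → ℝ) (hP0 : ∀ j, 0 ≤ P j)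
    (hP1 : ∑ j, P j = 1) (hx1 : ∀ j, x j ≤ 1) :
    1 ≤ (∑ j, P j * x j) ↔ ∀ j, 0 < P j → 1 ≤ x j := by
  have key : (∑ j, P j * (1 - x j)) ≤ 0 ↔ ∀ j, 0 < P j → (1 - x j) ≤ 0 :=
    sum_le_zero_iff' P (fun j => 1 - x j) hP0 (fun j => by simpa using sub_nonneg.mpr (hx1 j))
  have hsum : (∑ j, P j * (1 - x j)) = 1 - ∑ j, P j * x j := by
    simp [mul_sub, Finset.sum_sub_distrib, hP1]
  rw [hsum] at key
  constructor
  · intro h j hj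
    have := (key.mp (by linarith)) j hj
    linarith
  · intro h
    have := key.mpr (fun j hj => by linarith [h j hj])
    linarith


section Ops

variable {n : ℕ} {A : Fin n → Type*} {B : ∀ i, A i → Type*}
  [∀ i, Fintype (A i)] [∀ i, Nonempty (A i)]
  [∀ i a, Fintype (B i a)] [∀ i a, Nonempty (B i a)]
  (P : ∀ i (a : A i), B i a → Fin n → ℝ)

lemma exists_pos' (hP0 : ∀ i a b j, 0 ≤ P i a b j) (hP1 : ∀ i a b, ∑ j, P i a b j = 1)
    (i : Fin n) (a : A i) (b : B i a) : ∃ j, 0 < P i a b j := by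
  by_contra h
  push_neg at h
  have : (∑ j, P i a b j) ≤ 0 := Finset.sum_nonpos (fun j _ => h j)
  rw [hP1 i a b] at this
  linarith

lemma indic_nonneg' (K : Set (Fin n)) (j : Fin n) : 0 ≤ indic K j :=
  Set.indicator_nonneg (fun _ _ => zero_le_one) j

lemma indic_le_one' (K : Set (Fin n)) (j : Fin n) : indic K j ≤ 1 := by
  unfold indic
  by_cases h : j ∈ K <;> simp [h]

lemma F_le_one' (x : Fin n → ℝ) (hx1 : ∀ j, x j ≤ 1) (hP0 : ∀ i a b j, 0 ≤ P i a b j)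
    (hP1 : ∀ i a b, ∑ j, P i a b j = 1) (i : Fin n) :
    paymentFreeShapley P x i ≤ 1 := by
  unfold paymentFreeShapley
  rw [finInf_le_iff']
  refine ⟨Classical.arbitrary _, ?_⟩
  rw [finSup_le_iff']
  intro b
  calc (∑ j, P i (Classical.arbitrary _) b j * x j)
      ≤ ∑ j, P i (Classical.arbitrary _) b j := by
        apply Finset.sum_le_sum
        intro j _
        nlinarith [hP0 i (Classical.arbitrary _) b j, hx1 j]
    _ = 1 := hP1 _ _ _

lemma Fupper_le_one' (x : Fin n → ℝ) (hx1 : ∀ j, x j ≤ 1)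
    (hP0 : ∀ i a b j, 0 ≤ P i a b j) (hP1 : ∀ i a b, ∑ j, P i a b j = 1) (i : Fin n) :
    shapleyUpper P x i ≤ 1 := by
  unfold shapleyUpper
  rw [finInf_le_iff']
  refine ⟨Classical.arbitrary _, ?_⟩
  rw [finSup_le_iff']
  intro b
  haveI : Nonempty {j // 0 < P i (Classical.arbitrary _) b j} := by
    obtain ⟨j, hj⟩ := exists_pos' P hP0 hP1 i _ b
    exact ⟨⟨j, hj⟩⟩
  rw [finSup_le_iff']
  exact fun j => hx1 j

lemma F_nonneg' (x : Fin n → ℝ) (hx0 : ∀ j, 0 ≤ x j) (hP0 : ∀ i a b j, 0 ≤ P i a b j)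
    (i : Fin n) : 0 ≤ paymentFreeShapley P x i := by
  unfold paymentFreeShapley
  rw [le_finInf_iff']
  intro a
  rw [le_finSup_iff']
  refine ⟨Classical.arbitrary _, ?_⟩
  exact Finset.sum_nonneg (fun j _ => mul_nonneg (hP0 i a _ j) (hx0 j))

lemma Flower_nonneg' (x : Fin n → ℝ) (hx0 : ∀ j, 0 ≤ x j)
    (hP0 : ∀ i a b j, 0 ≤ P i a b j) (hP1 : ∀ i a b, ∑ j, P i a b j = 1) (i : Fin n) :
    0 ≤ shapleyLower P x i := by
  unfold shapleyLower
  rw [le_finInf_iff']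
  intro a
  rw [le_finSup_iff']
  refine ⟨Classical.arbitrary _, ?_⟩
  haveI : Nonempty {j // 0 < P i a (Classical.arbitrary _) j} := by
    obtain ⟨j, hj⟩ := exists_pos' P hP0 hP1 i a _
    exact ⟨⟨j, hj⟩⟩
  rw [le_finInf_iff']
  exact fun j => hx0 j

lemma upper_char' (x : Fin n → ℝ) (hx0 : ∀ j, 0 ≤ x j)
    (hP0 : ∀ i a b j, 0 ≤ P i a b j) (hP1 : ∀ i a b, ∑ j, P i a b j = 1) (i : Fin n) :
    paymentFreeShapley P x i ≤ 0 ↔ shapleyUpper P x i ≤ 0 := by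
  unfold paymentFreeShapley shapleyUpper
  rw [finInf_le_iff', finInf_le_iff']
  apply exists_congr
  intro a
  rw [finSup_le_iff', finSup_le_iff']
  apply forall_congr'
  intro b
  haveI : Nonempty {j // 0 < P i a b j} := by
    obtain ⟨j, hj⟩ := exists_pos' P hP0 hP1 i a b
    exact ⟨⟨j, hj⟩⟩
  rw [finSup_le_iff']
  rw [sum_le_zero_iff' _ _ (hP0 i a b) hx0]
  exact ⟨fun h j => h j j.2, fun h j hj => h ⟨j, hj⟩⟩

lemma lower_char' (x : Fin n → ℝ) (hx1 : ∀ j, x j ≤ 1)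
    (hP0 : ∀ i a b j, 0 ≤ P i a b j) (hP1 : ∀ i a b, ∑ j, P i a b j = 1) (i : Fin n) :
    1 ≤ paymentFreeShapley P x i ↔ 1 ≤ shapleyLower P x i := by
  unfold paymentFreeShapley shapleyLower
  rw [le_finInf_iff', le_finInf_iff']
  apply forall_congr'
  intro a
  rw [le_finSup_iff', le_finSup_iff']
  apply exists_congr
  intro b
  haveI : Nonempty {j // 0 < P i a b j} := by
    obtain ⟨j, hj⟩ := exists_pos' P hP0 hP1 i a b
    exact ⟨⟨j, hj⟩⟩
  rw [le_finInf_iff']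
  rw [one_le_sum_iff' _ _ (hP0 i a b) (hP1 i a b) hx1]
  exact ⟨fun h j => h j j.2, fun h j hj => h ⟨j, hj⟩⟩

end Ops

/-- the families `𝓕⁻` and `𝓕⁺` of invariant faces of a payment-free Shapley
operator are characterized by its upper and lower Boolean abstractions:
`I ∈ 𝓕⁻ ↔ F⁺(𝟏_{S∖I}) ≤ 𝟏_{S∖I}` and `J ∈ 𝓕⁺ ↔ F⁻(𝟏_J) ≥ 𝟏_J`. -/
theorem invariant_faces_boolean_characterization
    {n : ℕ} {A : Fin n → Type*} {B : ∀ i, A i → Type*}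
    [∀ i, Fintype (A i)] [∀ i, Nonempty (A i)]
    [∀ i a, Fintype (B i a)] [∀ i a, Nonempty (B i a)]
    (P : ∀ i (a : A i), B i a → Fin n → ℝ)
    (hP0 : ∀ i a b j, 0 ≤ P i a b j)
    (hP1 : ∀ i a b, ∑ j, P i a b j = 1)
    (I J : Set (Fin n)) :
    (I ∈ Fminus (paymentFreeShapley P) ↔ shapleyUpper P (indic Iᶜ) ≤ indic Iᶜ) ∧
    (J ∈ Fplus (paymentFreeShapley P) ↔ indic J ≤ shapleyLower P (indic J)) := by
  constructor
  · constructor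
    · intro h i
      by_cases hi : i ∈ I
      · have h0 : indic Iᶜ i = 0 := by
          unfold indic
          simp [hi]
        rw [h0]
        have := h i
        rw [h0] at this
        exact (upper_char' P _ (indic_nonneg' Iᶜ) hP0 hP1 i).mp this
      · have h1 : indic Iᶜ i = 1 := by
          unfold indic
          simp [hi]
        rw [h1]
        exact Fupper_le_one' P _ (indic_le_one' Iᶜ) hP0 hP1 i
    · intro h i
      by_cases hi : i ∈ I
      · have h0 : indic Iᶜ i = 0 := by
          unfold indic
          simp [hi]
        rw [h0]
        have := h i
        rw [h0] at this
        exact (upper_char' P _ (indic_nonneg' Iᶜ) hP0 hP1 i).mpr this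
      · have h1 : indic Iᶜ i = 1 := by
          unfold indic
          simp [hi]
        rw [h1]
        exact F_le_one' P _ (indic_le_one' Iᶜ) hP0 hP1 i
  · constructor
    · intro h i
      by_cases hi : i ∈ J
      · have h1 : indic J i = 1 := by
          unfold indic
          simp [hi]
        rw [h1]
        have := h i
        rw [h1] at this
        exact (lower_char' P _ (indic_le_one' J) hP0 hP1 i).mp this
      · have h0 : indic J i = 0 := by
          unfold indic
          simp [hi]
        rw [h0]
        exact Flower_nonneg' P _ (indic_nonneg' J) hP0 hP1 i
    · intro h i
      by_cases hi : i ∈ J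
      · have h1 : indic J i = 1 := by
          unfold indic
          simp [hi]
        rw [h1]
        have := h i
        rw [h1] at this
        exact (lower_char' P _ (indic_le_one' J) hP0 hP1 i).mpr this
      · have h0 : indic J i = 0 := by
          unfold indic
          simp [hi]
        rw [h0]
        exact F_nonneg' P _ (indic_nonneg' J) hP0 i
end
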